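/- arXiv:2505.11791 — 5 statements merged into one kernel-verified Lean document; each statement's English description precedes it below -/
import Mathlib

section
/- Corollary 1 (sensitivity of the Nash equilibrium set to multiplicative parameter perturbations): given any γ ∈ ℝ_{≥0}^{E×[m]}, there exists δ > 0 such that for every γ̃ ∈ ℝ_{≥0}^{E×[m]} satisfying (1 − δ)γ_{e,j} ≤ γ̃_{e,j} ≤ (1 + δ)γ_{e,j} for each e ∈ E and j ∈ {1,…,m}, the set of pure Nash equilibria satisfies 𝒜^NE(G(γ), T(γ̃)) ⊆ 𝒜^NE(G(γ), T(γ)). -/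
open Finset

namespace CG

variable {n m : ℕ} {E : Type} [Fintype E] [DecidableEq E]

/-- `load a e` is the number of agents using resource `e` under allocation `a`. -/
def load (a : Fin n → Finset E) (e : E) : ℕ :=
  (Finset.univ.filter fun i => e ∈ a i).card

/-- the cost `ℓ_e(k; γ) = Σ_j γ_{e,j} b_j(k)` of resource `e` at load `k`. -/
def resCost (b : Fin m → ℕ → ℝ) (γ : E → Fin m → ℝ) (e : E) (k : ℕ) : ℝ :=
  ∑ j, γ e j * b j k

/-- the toll `τ_e(k; γ̃) = Σ_j γ̃_{e,j} τ_j⋆(k)` on resource `e` at load `k`. -/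
def resToll (τs : Fin m → ℕ → ℝ) (γt : E → Fin m → ℝ) (e : E) (k : ℕ) : ℝ :=
  ∑ j, γt e j * τs j k

/-- agent `i`'s cost `J_i(a; γ, γ̃)` at allocation `a`. -/
def agentCost (b τs : Fin m → ℕ → ℝ) (γ γt : E → Fin m → ℝ)
    (a : Fin n → Finset E) (i : Fin n) : ℝ :=
  ∑ e ∈ a i, (resCost b γ e (load a e) + resToll τs γt e (load a e))

/-- `a` is a pure Nash equilibrium of the tolled congestion game `(G(γ), T(γ̃))`. -/
def IsNash (A : Fin n → Finset (Finset E)) (b τs : Fin m → ℕ → ℝ)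
    (γ γt : E → Fin m → ℝ) (a : Fin n → Finset E) : Prop :=
  (∀ i, a i ∈ A i) ∧
    ∀ i : Fin n, ∀ ai' ∈ A i,
      agentCost b τs γ γt a i ≤ agentCost b τs γ γt (Function.update a i ai') i

/-- the system cost `L(a; γ) = Σ_e |a|_e ℓ_e(|a|_e; γ)`. -/
def sysCost (b : Fin m → ℕ → ℝ) (γ : E → Fin m → ℝ) (a : Fin n → Finset E) : ℝ :=
  ∑ e, (load a e : ℝ) * resCost b γ e (load a e)

/-- the price of anarchy `PoA(G(γ), T(γ̃))`. -/
noncomputable def PoA (A : Fin n → Finset (Finset E)) (b τs : Fin m → ℕ → ℝ)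
    (γ γt : E → Fin m → ℝ) : ℝ :=
  sSup (sysCost b γ '' {a | IsNash A b τs γ γt a}) /
    sInf (sysCost b γ '' {a : Fin n → Finset E | ∀ i, a i ∈ A i})

/-- `x_e`: number of agents using `e` under both `a` and `a'`. -/
def labelX (a a' : Fin n → Finset E) (e : E) : ℕ :=
  (Finset.univ.filter fun i => e ∈ a i ∧ e ∈ a' i).card

/-- `y_e`: number of agents using `e` under `a` but not `a'`. -/
def labelY (a a' : Fin n → Finset E) (e : E) : ℕ :=
  (Finset.univ.filter fun i => e ∈ a i ∧ e ∉ a' i).card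

/-- `z_e`: number of agents using `e` under `a'` but not `a`. -/
def labelZ (a a' : Fin n → Finset E) (e : E) : ℕ :=
  (Finset.univ.filter fun i => e ∉ a i ∧ e ∈ a' i).card

/-- `θ(x,y,z,j) = Σ_{e : (x_e,y_e,z_e) = (x,y,z)} γ_{e,j}`. -/
def labelSum (γ : E → Fin m → ℝ) (a a' : Fin n → Finset E) (x y z : ℕ) (j : Fin m) : ℝ :=
  ∑ e ∈ Finset.univ.filter
      (fun e => labelX a a' e = x ∧ labelY a a' e = y ∧ labelZ a a' e = z),
    γ e j

/-- sum of `f` over the index set `I = {(x,y,z,j) : 1 ≤ x+y+z ≤ n}`. -/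
def sumI (n : ℕ) (f : ℕ → ℕ → ℕ → Fin m → ℝ) : ℝ :=
  ∑ x ∈ Finset.range (n + 1), ∑ y ∈ Finset.range (n + 1), ∑ z ∈ Finset.range (n + 1),
    ∑ j : Fin m, if 1 ≤ x + y + z ∧ x + y + z ≤ n then f x y z j else 0

/-- feasibility for the robust-PoA linear program at misspecification level `δ`. -/
def Feasible (n : ℕ) (b τs : Fin m → ℕ → ℝ) (δ : ℝ)
    (θ θh : ℕ → ℕ → ℕ → Fin m → ℝ) : Prop :=
  (∀ x y z j, 0 ≤ θ x y z j) ∧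
  (∀ x y z j, 0 ≤ θh x y z j) ∧
  sumI n (fun x y z j => (x + y : ℝ) * b j (x + y) * θ x y z j) = 1 ∧
  sumI n (fun x y z j =>
      ((y : ℝ) * b j (x + y) - (z : ℝ) * b j (x + y + 1)) * θ x y z j
        + ((y : ℝ) * τs j (x + y) - (z : ℝ) * τs j (x + y + 1)) * θh x y z j) ≤ 0 ∧
  (∀ x y z j, (1 - δ) * θ x y z j ≤ θh x y z j ∧ θh x y z j ≤ (1 + δ) * θ x y z j)

/-- `p⋆(δ)`: value of the robust-PoA linear program. -/
noncomputable def pstar (n : ℕ) (m : ℕ) (b τs : Fin m → ℕ → ℝ) (δ : ℝ) : ℝ :=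
  sInf { r : ℝ | ∃ θ θh : ℕ → ℕ → ℕ → Fin m → ℝ, Feasible n b τs δ θ θh ∧
    r = sumI n (fun x y z j => (x + z : ℝ) * b j (x + z) * θ x y z j) }

end CG

/-- The agent cost changes by at most `δ * B * Γ` when the toll parameters change
multiplicatively by at most `δ`. -/
lemma agentCost_toll_bound {n m : ℕ} {E : Type} [Fintype E] [DecidableEq E]
    (b τs : Fin m → ℕ → ℝ) (γ γt : E → Fin m → ℝ) (δ B : ℝ)
    (hB : ∀ (j : Fin m) (k : ℕ), k ≤ n → |τs j k| ≤ B)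
    (hclose : ∀ e j, |γt e j - γ e j| ≤ δ * γ e j)
    (c : Fin n → Finset E) (i : Fin n) :
    |CG.agentCost b τs γ γt c i - CG.agentCost b τs γ γ c i|
      ≤ δ * B * ∑ e : E, ∑ j : Fin m, γ e j := by
  classical
  have hload : ∀ e : E, CG.load c e ≤ n := by
    intro e
    calc (Finset.univ.filter fun i => e ∈ c i).card ≤ Finset.univ.card :=
          Finset.card_filter_le _ _
      _ = n := by simp
  have hdiff : CG.agentCost b τs γ γt c i - CG.agentCost b τs γ γ c i
      = ∑ e ∈ c i, ∑ j : Fin m, (γt e j - γ e j) * τs j (CG.load c e) := by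
    unfold CG.agentCost CG.resToll CG.resCost
    rw [← Finset.sum_sub_distrib]
    refine Finset.sum_congr rfl fun e _ => ?_
    rw [add_sub_add_left_eq_sub, ← Finset.sum_sub_distrib]
    exact Finset.sum_congr rfl fun j _ => (sub_mul _ _ _).symm
  rw [hdiff]
  calc |∑ e ∈ c i, ∑ j : Fin m, (γt e j - γ e j) * τs j (CG.load c e)|
      ≤ ∑ e ∈ c i, |∑ j : Fin m, (γt e j - γ e j) * τs j (CG.load c e)| :=
        Finset.abs_sum_le_sum_abs _ _
    _ ≤ ∑ e ∈ c i, ∑ j : Fin m, |(γt e j - γ e j) * τs j (CG.load c e)| :=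
        Finset.sum_le_sum fun e _ => Finset.abs_sum_le_sum_abs _ _
    _ ≤ ∑ e ∈ c i, ∑ j : Fin m, (δ * γ e j) * B := by
        refine Finset.sum_le_sum fun e _ => Finset.sum_le_sum fun j _ => ?_
        rw [abs_mul]
        exact mul_le_mul (hclose e j) (hB j _ (hload e)) (abs_nonneg _)
          (le_trans (abs_nonneg _) (hclose e j))
    _ ≤ ∑ e : E, ∑ j : Fin m, (δ * γ e j) * B := by
        refine Finset.sum_le_sum_of_subset_of_nonneg (Finset.subset_univ _)
          fun e _ _ => Finset.sum_nonneg fun j _ => ?_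
        have h1 := le_trans (abs_nonneg _) (hclose e j)
        have h2 : (0:ℝ) ≤ B := le_trans (abs_nonneg _) (hB j 0 (Nat.zero_le n))
        positivity
    _ = δ * B * ∑ e : E, ∑ j : Fin m, γ e j := by
        rw [Finset.mul_sum]
        refine Finset.sum_congr rfl fun e _ => ?_
        rw [Finset.mul_sum]
        refine Finset.sum_congr rfl fun j _ => ?_
        ring

/-- Corollary 1: sufficiently small multiplicative misspecifications of
the toll parameters introduce no new pure Nash equilibria:
`𝒜^NE(G(γ), T(γ̃)) ⊆ 𝒜^NE(G(γ), T(γ))`. -/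
theorem nash_set_sensitivity_multiplicative
    {n m : ℕ} {E : Type} [Fintype E] [DecidableEq E]
    (A : Fin n → Finset (Finset E)) (hA : ∀ i, (A i).Nonempty)
    (b τs : Fin m → ℕ → ℝ)
    (hb_nonneg : ∀ j k, 0 ≤ b j k) (hb_mono : ∀ j, Monotone (b j))
    (γ : E → Fin m → ℝ) (hγ : ∀ e j, 0 ≤ γ e j) :
    ∃ δ > (0 : ℝ), ∀ γt : E → Fin m → ℝ,
      (∀ e j, 0 ≤ γt e j) →
      (∀ e j, (1 - δ) * γ e j ≤ γt e j ∧ γt e j ≤ (1 + δ) * γ e j) →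
      ∀ a : Fin n → Finset E, CG.IsNash A b τs γ γt a → CG.IsNash A b τs γ γ a := by
  classical
  -- A bound `B` on the toll basis values at loads `≤ n`.
  set B : ℝ := ∑ j : Fin m, ∑ k ∈ Finset.range (n + 1), |τs j k| with hBdef
  have hB0 : 0 ≤ B :=
    Finset.sum_nonneg fun j _ => Finset.sum_nonneg fun k _ => abs_nonneg _
  have hτB : ∀ (j : Fin m) (k : ℕ), k ≤ n → |τs j k| ≤ B := by
    intro j k hk
    have h1 : |τs j k| ≤ ∑ k' ∈ Finset.range (n + 1), |τs j k'| :=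
      Finset.single_le_sum (f := fun k' => |τs j k'|) (fun _ _ => abs_nonneg _)
        (Finset.mem_range.mpr (by omega))
    have h2 : (∑ k' ∈ Finset.range (n + 1), |τs j k'|) ≤ B :=
      Finset.single_le_sum (f := fun j' => ∑ k' ∈ Finset.range (n + 1), |τs j' k'|)
        (fun _ _ => Finset.sum_nonneg fun _ _ => abs_nonneg _) (Finset.mem_univ j)
    linarith
  set Γ : ℝ := ∑ e : E, ∑ j : Fin m, γ e j with hΓdef
  have hΓ0 : 0 ≤ Γ :=
    Finset.sum_nonneg fun e _ => Finset.sum_nonneg fun j _ => hγ e j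
  -- the deviation-gain function over all triples (allocation, agent, deviation)
  set f : ((Fin n → Finset E) × Fin n × Finset E) → ℝ :=
    fun t => CG.agentCost b τs γ γ (Function.update t.1 t.2.1 t.2.2) t.2.1
      - CG.agentCost b τs γ γ t.1 t.2.1 with hfdef
  set S : Finset ℝ := (Finset.univ.image f).filter (fun r => r < 0) with hSdef
  set ε : ℝ := if h : S.Nonempty then -S.max' h else 1 with hεdef
  have hε0 : 0 < ε := by
    rw [hεdef]
    split_ifs with h
    · have hmem := S.max'_mem h
      have h2 : S.max' h < 0 := (Finset.mem_filter.mp hmem).2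
      linarith
    · norm_num
  have hεle : ∀ t, f t < 0 → f t ≤ -ε := by
    intro t ht
    have hmem : f t ∈ S :=
      Finset.mem_filter.mpr ⟨Finset.mem_image_of_mem f (Finset.mem_univ t), ht⟩
    have hne : S.Nonempty := ⟨f t, hmem⟩
    have hle := S.le_max' _ hmem
    rw [hεdef, dif_pos hne]
    linarith
  set δ : ℝ := ε / (2 * B * Γ + 1) with hδdef
  have hδ0 : 0 < δ := by
    rw [hδdef]; positivity
  have heq : δ * (2 * B * Γ + 1) = ε := by
    rw [hδdef]; field_simp
  have hkey : 2 * (δ * B * Γ) < ε := by nlinarith [hδ0]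
  refine ⟨δ, hδ0, ?_⟩
  intro γt hγt hclose a ha
  obtain ⟨hmem, hnash⟩ := ha
  have hclose' : ∀ e j, |γt e j - γ e j| ≤ δ * γ e j := by
    intro e j
    rw [abs_le]
    constructor <;> nlinarith [(hclose e j).1, (hclose e j).2]
  refine ⟨hmem, fun i ai' hai' => ?_⟩
  by_contra hlt
  push_neg at hlt
  have h1 : f (a, i, ai') < 0 := sub_neg.mpr hlt
  have h2 := hεle _ h1
  have h3 := hnash i ai' hai'
  have hb1 := abs_le.mp (agentCost_toll_bound b τs γ γt δ B hτB hclose' a i)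
  have hb2 := abs_le.mp
    (agentCost_toll_bound b τs γ γt δ B hτB hclose' (Function.update a i ai') i)
  rw [hfdef] at h2
  simp only at h2
  linarith
end

section
/- Corollary 2 (price-of-anarchy sensitivity under additive perturbations): given any γ ∈ ℝ_{≥0}^{E×[m]}, assume 𝒜^NE(G(γ), T(γ̃)) is nonempty for the relevant γ̃ and min_{a'∈𝒜} L(a';γ) > 0. Then there exists ε > 0 such that for every γ̃ ∈ ℝ_{≥0}^{E×[m]} satisfying |γ̃_{e,j} − γ_{e,j}| ≤ ε for each e ∈ E and j ∈ {1,…,m}, PoA(G(γ), T(γ̃)) ≤ PoA(G(γ), T(γ)). -/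
open Finset

lemma CG.load_le_n {n : ℕ} {E : Type} [Fintype E] [DecidableEq E]
    (a : Fin n → Finset E) (e : E) : CG.load a e ≤ n := by
  calc CG.load a e ≤ (Finset.univ : Finset (Fin n)).card := Finset.card_filter_le _ _
    _ = n := by simp

lemma CG.agentCost_diff_bound {n m : ℕ} {E : Type} [Fintype E] [DecidableEq E]
    (b τs : Fin m → ℕ → ℝ) (γ γt : E → Fin m → ℝ) (ε : ℝ) (hε : 0 ≤ ε)
    (hclose : ∀ e j, |γt e j - γ e j| ≤ ε) (a : Fin n → Finset E) (i : Fin n) :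
    |CG.agentCost b τs γ γt a i - CG.agentCost b τs γ γ a i| ≤
      ε * ∑ e : E, ∑ j : Fin m, ∑ k ∈ Finset.range (n + 1), |τs j k| := by
  have hdiff : CG.agentCost b τs γ γt a i - CG.agentCost b τs γ γ a i
      = ∑ e ∈ a i, ∑ j, (γt e j - γ e j) * τs j (CG.load a e) := by
    simp only [CG.agentCost, CG.resToll, ← Finset.sum_sub_distrib,
      add_sub_add_left_eq_sub, sub_mul]
  rw [hdiff]
  calc |∑ e ∈ a i, ∑ j, (γt e j - γ e j) * τs j (CG.load a e)|
      ≤ ∑ e ∈ a i, |∑ j, (γt e j - γ e j) * τs j (CG.load a e)| :=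
        Finset.abs_sum_le_sum_abs _ _
    _ ≤ ∑ e ∈ a i, ∑ j, |(γt e j - γ e j) * τs j (CG.load a e)| := by
        exact Finset.sum_le_sum fun e _ => Finset.abs_sum_le_sum_abs _ _
    _ ≤ ∑ e ∈ a i, ∑ j, ε * (∑ k ∈ Finset.range (n + 1), |τs j k|) := by
        refine Finset.sum_le_sum fun e _ => Finset.sum_le_sum fun j _ => ?_
        rw [abs_mul]
        have h1 : |τs j (CG.load a e)| ≤ ∑ k ∈ Finset.range (n + 1), |τs j k| := by
          refine Finset.single_le_sum (f := fun k => |τs j k|) (fun k _ => abs_nonneg _) ?_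
          exact Finset.mem_range.2 (Nat.lt_succ_of_le (CG.load_le_n a e))
        exact mul_le_mul (hclose e j) h1 (abs_nonneg _) hε
    _ ≤ ∑ e : E, ∑ j, ε * (∑ k ∈ Finset.range (n + 1), |τs j k|) := by
        refine Finset.sum_le_sum_of_subset_of_nonneg (Finset.subset_univ _)
          fun e _ _ => Finset.sum_nonneg fun j _ => ?_
        exact mul_nonneg hε (Finset.sum_nonneg fun k _ => abs_nonneg _)
    _ = ε * ∑ e : E, ∑ j : Fin m, ∑ k ∈ Finset.range (n + 1), |τs j k| := by
        rw [Finset.mul_sum]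
        exact Finset.sum_congr rfl fun e _ => by rw [Finset.mul_sum]

/-- Corollary 2: price-of-anarchy sensitivity under additive
perturbations: for all sufficiently small additive misspecifications `γ̃` of `γ`
(with a nonempty equilibrium set), `PoA(G(γ), T(γ̃)) ≤ PoA(G(γ), T(γ))`. -/
theorem poa_sensitivity_additive
    {n m : ℕ} {E : Type} [Fintype E] [DecidableEq E]
    (A : Fin n → Finset (Finset E)) (hA : ∀ i, (A i).Nonempty)
    (b τs : Fin m → ℕ → ℝ)
    (hb_nonneg : ∀ j k, 0 ≤ b j k) (hb_mono : ∀ j, Monotone (b j))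
    (γ : E → Fin m → ℝ) (hγ : ∀ e j, 0 ≤ γ e j)
    (hNE : {a : Fin n → Finset E | CG.IsNash A b τs γ γ a}.Nonempty)
    (hmin : 0 < sInf (CG.sysCost b γ '' {a : Fin n → Finset E | ∀ i, a i ∈ A i})) :
    ∃ ε > (0 : ℝ), ∀ γt : E → Fin m → ℝ,
      (∀ e j, 0 ≤ γt e j) → (∀ e j, |γt e j - γ e j| ≤ ε) →
      {a : Fin n → Finset E | CG.IsNash A b τs γ γt a}.Nonempty →
      CG.PoA A b τs γ γt ≤ CG.PoA A b τs γ γ := by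
  classical
  set C : ℝ := ∑ e : E, ∑ j : Fin m, ∑ k ∈ Finset.range (n + 1), |τs j k| with hC
  have hC0 : 0 ≤ C := Finset.sum_nonneg fun e _ => Finset.sum_nonneg fun j _ =>
    Finset.sum_nonneg fun k _ => abs_nonneg _
  have key : ∀ a : Fin n → Finset E, (∀ i, a i ∈ A i) → ¬ CG.IsNash A b τs γ γ a →
      ∃ ε > (0 : ℝ), ∀ γt : E → Fin m → ℝ,
        (∀ e j, |γt e j - γ e j| ≤ ε) → ¬ CG.IsNash A b τs γ γt a := by
    intro a hfeas hnot
    rw [CG.IsNash, not_and] at hnot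
    have h := hnot hfeas
    push_neg at h
    obtain ⟨i, ai', hai', hlt⟩ := h
    set v : ℝ := CG.agentCost b τs γ γ a i
      - CG.agentCost b τs γ γ (Function.update a i ai') i with hv
    have hv0 : 0 < v := sub_pos.2 hlt
    have hε0 : (0 : ℝ) < v / (2 * (C + 1)) := by positivity
    refine ⟨v / (2 * (C + 1)), hε0, ?_⟩
    intro γt hclose hNash
    have hεC : v / (2 * (C + 1)) * C < v / 2 := by
      rw [div_mul_eq_mul_div, div_lt_div_iff₀ (by positivity) (by norm_num)]
      nlinarith
    have h1 := abs_le.1 (CG.agentCost_diff_bound b τs γ γt _ hε0.le hclose a i)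
    have h2 := abs_le.1 (CG.agentCost_diff_bound b τs γ γt _ hε0.le hclose
      (Function.update a i ai') i)
    have h3 := hNash.2 i ai' hai'
    rw [← hC] at h1 h2
    linarith [h1.1, h1.2, h2.1, h2.2]
  choose! εf hεf1 hεf2 using key
  set S : Finset (Fin n → Finset E) :=
    Finset.univ.filter (fun a => (∀ i, a i ∈ A i) ∧ ¬ CG.IsNash A b τs γ γ a) with hS
  set T : Finset ℝ := insert (1 : ℝ) (S.image εf) with hT
  have hTne : T.Nonempty := ⟨1, Finset.mem_insert_self _ _⟩
  set ε : ℝ := T.min' hTne with hε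
  have hε0 : 0 < ε := by
    rw [hε]
    refine (Finset.lt_min'_iff T hTne).2 fun y hy => ?_
    rcases Finset.mem_insert.1 hy with rfl | hy
    · norm_num
    · obtain ⟨a, haS, rfl⟩ := Finset.mem_image.1 hy
      have ha := Finset.mem_filter.1 haS
      exact hεf1 a ha.2.1 ha.2.2
  refine ⟨ε, hε0, ?_⟩
  intro γt hγt hclose hNEt
  have hsub : {a : Fin n → Finset E | CG.IsNash A b τs γ γt a}
      ⊆ {a : Fin n → Finset E | CG.IsNash A b τs γ γ a} := by
    intro a ha
    by_contra hnot
    have hfeas : ∀ i, a i ∈ A i := ha.1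
    have haS : a ∈ S := Finset.mem_filter.2 ⟨Finset.mem_univ a, hfeas, hnot⟩
    have hle : ε ≤ εf a :=
      Finset.min'_le T _ (Finset.mem_insert_of_mem (Finset.mem_image_of_mem εf haS))
    exact hεf2 a hfeas hnot γt (fun e j => le_trans (hclose e j) hle) ha
  have hbdd : BddAbove (CG.sysCost b γ '' {a : Fin n → Finset E | CG.IsNash A b τs γ γ a}) :=
    ((Set.toFinite _).image _).bddAbove
  have hnum : sSup (CG.sysCost b γ '' {a : Fin n → Finset E | CG.IsNash A b τs γ γt a})
      ≤ sSup (CG.sysCost b γ '' {a : Fin n → Finset E | CG.IsNash A b τs γ γ a}) :=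
    csSup_le_csSup hbdd (hNEt.image _) (Set.image_mono hsub)
  simp only [CG.PoA]
  exact div_le_div_of_nonneg_right hnum hmin.le
end

section
/- Corollary 3 (price-of-anarchy sensitivity under multiplicative perturbations): given any γ ∈ ℝ_{≥0}^{E×[m]}, assume 𝒜^NE(G(γ), T(γ̃)) is nonempty for the relevant γ̃ and min_{a'∈𝒜} L(a';γ) > 0. Then there exists δ > 0 such that for every γ̃ ∈ ℝ_{≥0}^{E×[m]} satisfying |γ̃_{e,j} − γ_{e,j}| ≤ δ·γ_{e,j} for each e ∈ E and j ∈ {1,…,m}, PoA(G(γ), T(γ̃)) ≤ PoA(G(γ), T(γ)). -/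
open Finset

section Aux

variable {n m : ℕ} {E : Type} [Fintype E] [DecidableEq E]

lemma CG.load_le (a : Fin n → Finset E) (e : E) : CG.load a e ≤ n := by
  unfold CG.load
  calc (Finset.univ.filter fun i => e ∈ a i).card
      ≤ (Finset.univ : Finset (Fin n)).card := Finset.card_filter_le _ _
    _ = n := by simp

lemma CG.pert_bound (b τs : Fin m → ℕ → ℝ) (γ γt : E → Fin m → ℝ)
    (hγ : ∀ e j, 0 ≤ γ e j) {δ : ℝ} (hδ : 0 ≤ δ)
    (hclose : ∀ e j, |γt e j - γ e j| ≤ δ * γ e j)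
    (a : Fin n → Finset E) (i : Fin n) :
    |CG.agentCost b τs γ γt a i - CG.agentCost b τs γ γ a i|
      ≤ δ * ∑ e, ∑ j, γ e j * (∑ k ∈ Finset.range (n+1), |τs j k|) := by
  have key : CG.agentCost b τs γ γt a i - CG.agentCost b τs γ γ a i
      = ∑ e ∈ a i, ∑ j, (γt e j - γ e j) * τs j (CG.load a e) := by
    simp only [CG.agentCost, CG.resToll, ← Finset.sum_sub_distrib, sub_mul]
    exact Finset.sum_congr rfl fun e _ => by rw [add_sub_add_left_eq_sub, ← Finset.sum_sub_distrib]
  rw [key]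
  calc |∑ e ∈ a i, ∑ j, (γt e j - γ e j) * τs j (CG.load a e)|
      ≤ ∑ e ∈ a i, ∑ j, |(γt e j - γ e j) * τs j (CG.load a e)| :=
        (Finset.abs_sum_le_sum_abs _ _).trans
          (Finset.sum_le_sum fun e _ => Finset.abs_sum_le_sum_abs _ _)
    _ ≤ ∑ e ∈ a i, ∑ j, δ * (γ e j * ∑ k ∈ Finset.range (n+1), |τs j k|) := by
        refine Finset.sum_le_sum fun e _ => Finset.sum_le_sum fun j _ => ?_
        rw [abs_mul]
        have h2 : |τs j (CG.load a e)| ≤ ∑ k ∈ Finset.range (n+1), |τs j k| := by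
          refine Finset.single_le_sum (f := fun k => |τs j k|) (fun k _ => abs_nonneg _) ?_
          simp [Nat.lt_succ_iff, CG.load_le]
        calc |γt e j - γ e j| * |τs j (CG.load a e)|
            ≤ (δ * γ e j) * (∑ k ∈ Finset.range (n+1), |τs j k|) :=
              mul_le_mul (hclose e j) h2 (abs_nonneg _)
                (mul_nonneg hδ (hγ e j))
          _ = δ * (γ e j * ∑ k ∈ Finset.range (n+1), |τs j k|) := by ring
    _ ≤ ∑ e, ∑ j, δ * (γ e j * ∑ k ∈ Finset.range (n+1), |τs j k|) := by
        refine Finset.sum_le_sum_of_subset_of_nonneg (Finset.subset_univ _) ?_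
        intro e _ _
        exact Finset.sum_nonneg fun j _ => mul_nonneg hδ
          (mul_nonneg (hγ e j) (Finset.sum_nonneg fun k _ => abs_nonneg _))
    _ = δ * ∑ e, ∑ j, γ e j * (∑ k ∈ Finset.range (n+1), |τs j k|) := by
        rw [Finset.mul_sum]; exact Finset.sum_congr rfl fun e _ => by rw [Finset.mul_sum]

end Aux

/-- Corollary 3: price-of-anarchy sensitivity under multiplicative
perturbations: for all sufficiently small relative misspecifications `γ̃` of `γ`
(with a nonempty equilibrium set), `PoA(G(γ), T(γ̃)) ≤ PoA(G(γ), T(γ))`. -/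
theorem poa_sensitivity_multiplicative
    {n m : ℕ} {E : Type} [Fintype E] [DecidableEq E]
    (A : Fin n → Finset (Finset E)) (hA : ∀ i, (A i).Nonempty)
    (b τs : Fin m → ℕ → ℝ)
    (hb_nonneg : ∀ j k, 0 ≤ b j k) (hb_mono : ∀ j, Monotone (b j))
    (γ : E → Fin m → ℝ) (hγ : ∀ e j, 0 ≤ γ e j)
    (hNE : {a : Fin n → Finset E | CG.IsNash A b τs γ γ a}.Nonempty)
    (hmin : 0 < sInf (CG.sysCost b γ '' {a : Fin n → Finset E | ∀ i, a i ∈ A i})) :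
    ∃ δ > (0 : ℝ), ∀ γt : E → Fin m → ℝ,
      (∀ e j, 0 ≤ γt e j) → (∀ e j, |γt e j - γ e j| ≤ δ * γ e j) →
      {a : Fin n → Finset E | CG.IsNash A b τs γ γt a}.Nonempty →
      CG.PoA A b τs γ γt ≤ CG.PoA A b τs γ γ := by
  classical
  set C : ℝ := ∑ e, ∑ j, γ e j * (∑ k ∈ Finset.range (n+1), |τs j k|) with hCdef
  have hC : 0 ≤ C :=
    Finset.sum_nonneg fun e _ => Finset.sum_nonneg fun j _ =>
      mul_nonneg (hγ e j) (Finset.sum_nonneg fun k _ => abs_nonneg _)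
  -- the finite set of "bad" deviations for γ
  set f : (Fin n → Finset E) × Fin n × Finset E → ℝ := fun p =>
    CG.agentCost b τs γ γ p.1 p.2.1
      - CG.agentCost b τs γ γ (Function.update p.1 p.2.1 p.2.2) p.2.1 with hfdef
  set P : Finset ((Fin n → Finset E) × Fin n × Finset E) :=
    Finset.univ.filter (fun p => p.2.2 ∈ A p.2.1 ∧ 0 < f p) with hPdef
  set g : ℝ := if h : P.Nonempty then P.inf' h f else 1 with hgdef
  have hg : 0 < g := by
    rw [hgdef]
    split
    · rename_i h
      rw [Finset.lt_inf'_iff]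
      intro p hp
      exact ((Finset.mem_filter.mp hp).2).2
    · norm_num
  refine ⟨g / (2 * (C + 1)), div_pos hg (by linarith), ?_⟩
  intro γt hγt hclose hNEt
  set δ : ℝ := g / (2 * (C + 1)) with hδdef
  have hδpos : 0 < δ := div_pos hg (by linarith)
  have hδeq : δ * (2 * (C + 1)) = g :=
    div_mul_cancel₀ _ (by positivity : (2 * (C + 1) : ℝ) ≠ 0)
  -- every Nash equilibrium of (γ, γt) is one of (γ, γ)
  have hsubset : {a : Fin n → Finset E | CG.IsNash A b τs γ γt a}
      ⊆ {a : Fin n → Finset E | CG.IsNash A b τs γ γ a} := by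
    rintro a ⟨haA, hbest⟩
    refine ⟨haA, fun i ai' hai' => ?_⟩
    by_contra hlt
    push_neg at hlt
    have hPmem : (a, i, ai') ∈ P := by
      rw [hPdef, Finset.mem_filter]
      exact ⟨Finset.mem_univ _, hai', by simpa [hfdef] using sub_pos.mpr hlt⟩
    have hge : g ≤ f (a, i, ai') := by
      rw [hgdef, dif_pos ⟨_, hPmem⟩]
      exact Finset.inf'_le _ hPmem
    have h1 := CG.pert_bound b τs γ γt hγ hδpos.le hclose a i
    have h2 := CG.pert_bound b τs γ γt hγ hδpos.le hclose (Function.update a i ai') i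
    have h3 := hbest i ai' hai'
    have hb1 := abs_le.mp h1
    have hb2 := abs_le.mp h2
    have hsmall : 2 * (δ * C) < g := by nlinarith
    simp only [hfdef] at hge
    rw [← hCdef] at hb1 hb2
    linarith [hb1.1, hb1.2, hb2.1, hb2.2]
  -- conclude PoA comparison
  unfold CG.PoA
  have hfin : (CG.sysCost b γ '' {a : Fin n → Finset E | CG.IsNash A b τs γ γ a}).Finite :=
    Set.Finite.image _ (Set.toFinite _)
  have hsup : sSup (CG.sysCost b γ '' {a | CG.IsNash A b τs γ γt a})
      ≤ sSup (CG.sysCost b γ '' {a | CG.IsNash A b τs γ γ a}) :=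
    csSup_le_csSup hfin.bddAbove (hNEt.image _) (Set.image_mono hsubset)
  exact (div_le_div_iff_of_pos_right hmin).mpr hsup
end

section
/- Label decomposition of aggregate unilateral-deviation costs: fix two allocations a, a' ∈ 𝒜, assign labels (x_e, y_e, z_e) to each resource e with x_e = #{i : e ∈ a_i ∩ a'_i}, y_e = #{i : e ∈ a_i \ a'_i}, z_e = #{i : e ∈ a'_i \ a_i}, and define θ(x,y,z,j) := Σ_{e : (x_e,y_e,z_e)=(x,y,z)} γ_{e,j} and θ̃(x,y,z,j) := Σ_{e : (x_e,y_e,z_e)=(x,y,z)} γ̃_{e,j} over I = {(x,y,z,j) ∈ ℤ_{≥0}^3 × {1,…,m} : 1 ≤ x+y+z ≤ n}. Then Σ_{i=1}^n J_i((a'_i, a_{−i}); γ, γ̃) = Σ_{(x,y,z,j) ∈ I} [(x·b_j(x+y) + z·b_j(x+y+1))·θ(x,y,z,j) + (x·τ_j⋆(x+y) + z·τ_j⋆(x+y+1))·θ̃(x,y,z,j)], with b_j(0) := 0 and τ_j⋆(0) := 0 by convention (note x+y+1 ≤ n whenever z ≥ 1, so all arguments appearing with nonzero coefficients lie in {1,…,n}).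 -/
open Finset

section Aux
open CG
set_option linter.unusedSectionVars false
variable {n m : ℕ} {E : Type} [Fintype E] [DecidableEq E]

lemma load_eqXY (a a' : Fin n → Finset E) (e : E) :
    load a e = labelX a a' e + labelY a a' e := by
  unfold load labelX labelY
  rw [← Finset.filter_filter, ← Finset.filter_filter,
    Finset.card_filter_add_card_filter_not]

lemma labels_le (a a' : Fin n → Finset E) (e : E) :
    labelX a a' e + labelY a a' e + labelZ a a' e ≤ n := by
  have h1 : labelX a a' e + labelY a a' e = (univ.filter fun i => e ∈ a i).card :=
    (load_eqXY a a' e).symm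
  have h2 : labelZ a a' e ≤ (univ.filter fun i => ¬ e ∈ a i).card := by
    apply Finset.card_le_card
    intro i hi
    simp only [mem_filter] at hi ⊢
    exact ⟨hi.1, hi.2.1⟩
  have h3 := Finset.card_filter_add_card_filter_not
    (s := (univ : Finset (Fin n))) (p := fun i => e ∈ a i)
  simp only [Finset.card_univ, Fintype.card_fin] at h3
  omega

lemma load_update_mem (a : Fin n → Finset E) (i : Fin n) (ai' : Finset E) (e : E)
    (h : e ∈ a i) (h' : e ∈ ai') :
    load (Function.update a i ai') e = load a e := by
  unfold load
  congr 1
  apply Finset.filter_congr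
  intro j _
  by_cases hj : j = i
  · subst hj; simp [h, h']
  · simp [Function.update_of_ne hj]

lemma load_update_notMem (a : Fin n → Finset E) (i : Fin n) (ai' : Finset E) (e : E)
    (h : e ∉ a i) (h' : e ∈ ai') :
    load (Function.update a i ai') e = load a e + 1 := by
  unfold load
  have heq : (univ.filter fun j => e ∈ Function.update a i ai' j)
      = insert i (univ.filter fun j => e ∈ a j) := by
    ext j
    by_cases hj : j = i
    · subst hj; simp [h, h']
    · simp [Function.update_of_ne hj, hj]
  rw [heq, Finset.card_insert_of_notMem (by simp [h])]

/-- per-resource contribution -/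
noncomputable def perRes (b τs : Fin m → ℕ → ℝ) (γ γt : E → Fin m → ℝ)
    (a a' : Fin n → Finset E) (e : E) : ℝ :=
  (labelX a a' e : ℝ) * (resCost b γ e (labelX a a' e + labelY a a' e)
      + resToll τs γt e (labelX a a' e + labelY a a' e))
    + (labelZ a a' e : ℝ) * (resCost b γ e (labelX a a' e + labelY a a' e + 1)
      + resToll τs γt e (labelX a a' e + labelY a a' e + 1))

lemma lhs_eq (b τs : Fin m → ℕ → ℝ) (γ γt : E → Fin m → ℝ) (a a' : Fin n → Finset E) :
    ∑ i : Fin n, agentCost b τs γ γt (Function.update a i (a' i)) i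
      = ∑ e, perRes b τs γ γt a a' e := by
  simp only [agentCost, Function.update_self]
  have swap : ∀ (f : Fin n → E → ℝ),
      (∑ i, ∑ e ∈ a' i, f i e)
        = ∑ e, ∑ i ∈ univ.filter (fun i => e ∈ a' i), f i e := by
    intro f
    calc ∑ i, ∑ e ∈ a' i, f i e
        = ∑ i, ∑ e : E, if e ∈ a' i then f i e else 0 := by
          refine Finset.sum_congr rfl fun i _ => ?_
          rw [Finset.sum_ite_mem, Finset.univ_inter]
      _ = ∑ e : E, ∑ i, if e ∈ a' i then f i e else 0 := Finset.sum_comm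
      _ = ∑ e, ∑ i ∈ univ.filter (fun i => e ∈ a' i), f i e := by
          exact Finset.sum_congr rfl fun e _ => (Finset.sum_filter _ _).symm
  rw [swap]
  refine Finset.sum_congr rfl fun e _ => ?_
  rw [← Finset.sum_filter_add_sum_filter_not (univ.filter fun i => e ∈ a' i)
    (fun i => e ∈ a i)]
  have hX : ((univ.filter fun i => e ∈ a' i).filter fun i => e ∈ a i).card
      = labelX a a' e := by
    rw [Finset.filter_filter]
    unfold labelX
    congr 1
    apply Finset.filter_congr
    intro i _
    simp [and_comm]
  have hZ : ((univ.filter fun i => e ∈ a' i).filter fun i => ¬ e ∈ a i).card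
      = labelZ a a' e := by
    rw [Finset.filter_filter]
    unfold labelZ
    congr 1
    apply Finset.filter_congr
    intro i _
    simp [and_comm]
  have s1 : ∑ i ∈ (univ.filter fun i => e ∈ a' i).filter (fun i => e ∈ a i),
      (resCost b γ e (load (Function.update a i (a' i)) e)
        + resToll τs γt e (load (Function.update a i (a' i)) e))
      = (labelX a a' e : ℝ) * (resCost b γ e (labelX a a' e + labelY a a' e)
        + resToll τs γt e (labelX a a' e + labelY a a' e)) := by
    rw [Finset.sum_congr rfl (fun i hi => ?_), Finset.sum_const, hX, nsmul_eq_mul]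
    simp only [mem_filter] at hi
    rw [load_update_mem a i (a' i) e hi.2 hi.1.2, load_eqXY a a']
  have s2 : ∑ i ∈ (univ.filter fun i => e ∈ a' i).filter (fun i => ¬ e ∈ a i),
      (resCost b γ e (load (Function.update a i (a' i)) e)
        + resToll τs γt e (load (Function.update a i (a' i)) e))
      = (labelZ a a' e : ℝ) * (resCost b γ e (labelX a a' e + labelY a a' e + 1)
        + resToll τs γt e (labelX a a' e + labelY a a' e + 1)) := by
    rw [Finset.sum_congr rfl (fun i hi => ?_), Finset.sum_const, hZ, nsmul_eq_mul]
    simp only [mem_filter] at hi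
    rw [load_update_notMem a i (a' i) e hi.2 hi.1.2, load_eqXY a a']
  rw [s1, s2]
  rfl

end Aux

section Aux2
open CG
set_option linter.unusedSectionVars false
variable {n m : ℕ} {E : Type} [Fintype E] [DecidableEq E]

lemma sumI_label (a a' : Fin n → Finset E) (g : ℕ → ℕ → ℕ → Fin m → E → ℝ)
    (hg : ∀ j e, g 0 0 0 j e = 0) :
    sumI n (fun x y z j => ∑ e ∈ univ.filter
        (fun e => labelX a a' e = x ∧ labelY a a' e = y ∧ labelZ a a' e = z),
      g x y z j e)
    = ∑ e, ∑ j, g (labelX a a' e) (labelY a a' e) (labelZ a a' e) j e := by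
  unfold sumI
  have step1 : ∀ x y z : ℕ, ∀ j : Fin m,
      (if 1 ≤ x + y + z ∧ x + y + z ≤ n then
          ∑ e ∈ univ.filter (fun e => labelX a a' e = x ∧ labelY a a' e = y
            ∧ labelZ a a' e = z), g x y z j e
        else 0)
      = ∑ e : E, if 1 ≤ x + y + z ∧ x + y + z ≤ n then
          (if labelX a a' e = x ∧ labelY a a' e = y ∧ labelZ a a' e = z then
            g x y z j e else 0) else 0 := by
    intro x y z j
    rw [Finset.sum_filter]
    split_ifs with h
    · rfl
    · simp
  simp only [step1]
  have c1 : ∀ (F : Fin m → E → ℝ), ∑ j, ∑ e, F j e = ∑ e, ∑ j, F j e :=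
    fun F => Finset.sum_comm
  have c2 : ∀ (s : Finset ℕ) (F : ℕ → E → ℝ),
      ∑ z ∈ s, ∑ e, F z e = ∑ e, ∑ z ∈ s, F z e := fun s F => Finset.sum_comm
  simp only [c1, c2]
  refine Finset.sum_congr rfl fun e _ => ?_
  have hle := labels_le a a' e
  rw [Finset.sum_eq_single_of_mem (labelX a a' e) (Finset.mem_range.mpr (by omega))
    (fun x _ hx => Finset.sum_eq_zero fun y _ => Finset.sum_eq_zero fun z _ =>
      Finset.sum_eq_zero fun j _ => by simp [Ne.symm hx])]
  rw [Finset.sum_eq_single_of_mem (labelY a a' e) (Finset.mem_range.mpr (by omega))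
    (fun y _ hy => Finset.sum_eq_zero fun z _ =>
      Finset.sum_eq_zero fun j _ => by simp [Ne.symm hy])]
  rw [Finset.sum_eq_single_of_mem (labelZ a a' e) (Finset.mem_range.mpr (by omega))
    (fun z _ hz => Finset.sum_eq_zero fun j _ => by simp [Ne.symm hz])]
  refine Finset.sum_congr rfl fun j _ => ?_
  by_cases hc : 1 ≤ labelX a a' e + labelY a a' e + labelZ a a' e
  · simp [hc, hle]
  · have hX : labelX a a' e = 0 := by omega
    have hY : labelY a a' e = 0 := by omega
    have hZ : labelZ a a' e = 0 := by omega
    simp [hX, hY, hZ, hg]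

lemma rhs_eq (b τs : Fin m → ℕ → ℝ) (γ γt : E → Fin m → ℝ) (a a' : Fin n → Finset E) :
    sumI n (fun x y z j =>
        ((x : ℝ) * b j (x + y) + (z : ℝ) * b j (x + y + 1)) * labelSum γ a a' x y z j
          + ((x : ℝ) * τs j (x + y) + (z : ℝ) * τs j (x + y + 1)) * labelSum γt a a' x y z j)
      = ∑ e, perRes b τs γ γt a a' e := by
  have hfun : (fun (x y z : ℕ) (j : Fin m) =>
      ((x : ℝ) * b j (x + y) + (z : ℝ) * b j (x + y + 1)) * labelSum γ a a' x y z j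
        + ((x : ℝ) * τs j (x + y) + (z : ℝ) * τs j (x + y + 1)) * labelSum γt a a' x y z j)
      = (fun x y z j => ∑ e ∈ univ.filter
          (fun e => labelX a a' e = x ∧ labelY a a' e = y ∧ labelZ a a' e = z),
        (((x : ℝ) * b j (x + y) + (z : ℝ) * b j (x + y + 1)) * γ e j
          + ((x : ℝ) * τs j (x + y) + (z : ℝ) * τs j (x + y + 1)) * γt e j)) := by
    funext x y z j
    rw [labelSum, labelSum, Finset.mul_sum, Finset.mul_sum, ← Finset.sum_add_distrib]
  rw [hfun, sumI_label a a' _ (by intro j e; simp)]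
  refine Finset.sum_congr rfl fun e _ => ?_
  unfold perRes resCost resToll
  simp only [mul_add, Finset.mul_sum, ← Finset.sum_add_distrib]
  refine Finset.sum_congr rfl fun j _ => ?_
  ring

end Aux2
/-- label decomposition of aggregate unilateral-deviation costs:
`Σ_i J_i((a'_i, a_{−i}); γ, γ̃) = Σ_{(x,y,z,j) ∈ I} [(x·b_j(x+y) + z·b_j(x+y+1))·θ
+ (x·τ_j⋆(x+y) + z·τ_j⋆(x+y+1))·θ̃]`. -/
theorem label_decomposition_deviation_cost
    {n m : ℕ} {E : Type} [Fintype E] [DecidableEq E]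
    (A : Fin n → Finset (Finset E)) (hA : ∀ i, (A i).Nonempty)
    (b τs : Fin m → ℕ → ℝ)
    (hb_nonneg : ∀ j k, 0 ≤ b j k) (hb_mono : ∀ j, Monotone (b j))
    (hb0 : ∀ j, b j 0 = 0) (hτ0 : ∀ j, τs j 0 = 0)
    (γ γt : E → Fin m → ℝ) (hγ : ∀ e j, 0 ≤ γ e j) (hγt : ∀ e j, 0 ≤ γt e j)
    (a a' : Fin n → Finset E) (ha : ∀ i, a i ∈ A i) (ha' : ∀ i, a' i ∈ A i) :
    ∑ i : Fin n, CG.agentCost b τs γ γt (Function.update a i (a' i)) i =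
      CG.sumI n (fun x y z j =>
        ((x : ℝ) * b j (x + y) + (z : ℝ) * b j (x + y + 1))
            * CG.labelSum γ a a' x y z j
          + ((x : ℝ) * τs j (x + y) + (z : ℝ) * τs j (x + y + 1))
            * CG.labelSum γt a a' x y z j) := by
  rw [lhs_eq b τs γ γt a a']
  exact (rhs_eq b τs γ γt a a').symm
end

section
/- Tightness direction of Proposition 2: let δ ≥ 0 and suppose the linear program defining p⋆(δ) attains its optimal value at some pair (θ⋆, θ̂⋆), with p⋆(δ) > 0. Then there exists an atomic congestion game with at most n agents — i.e., a finite resource set E, action sets 𝒜_i ⊆ 2^E, and parameters γ ∈ ℝ_{≥0}^{E×[m]} so that each resource cost is ℓ_e(·;γ) = Σ_j γ_{e,j} b_j(·) — together with γ̃ ∈ ℝ_{≥0}^{E×[m]} satisfying |γ̃_{e,j} − γ_{e,j}| ≤ δ·γ_{e,j} for all e, j, and a pure Nash equilibrium a^NE of (G(γ), T(γ̃)) and an allocation a' ∈ 𝒜 such that L(a'; γ) = p⋆(δ)·L(a^NE; γ) and L(a^NE;γ) > 0; consequently PoA(G(γ), T(γ̃)) ≥ 1/p⋆(δ), so the worst-case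 price of anarchy over this class of games equals 1/p⋆(δ). -/
open Finset

namespace RPT
open CG

section generic
variable {n m : ℕ} {E : Type} [Fintype E] [DecidableEq E]
set_option linter.unusedSectionVars false

lemma sum_ite_count {α : Type*} [Fintype α] (P : α → Prop) [DecidablePred P] (c : ℝ) :
    (∑ v : α, if P v then c else 0) = ((univ.filter P).card : ℝ) * c := by
  rw [← Finset.sum_filter, Finset.sum_const, nsmul_eq_mul]

lemma load_update_of_mem (a : Fin n → Finset E) (i : Fin n) (s : Finset E) (e : E)
    (h1 : e ∈ a i) (h2 : e ∈ s) :
    CG.load (Function.update a i s) e = CG.load a e := by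
  unfold CG.load
  congr 1
  apply Finset.filter_congr
  intro i' _
  rcases eq_or_ne i' i with rfl | hne
  · simp [h1, h2]
  · simp [Function.update_of_ne hne]

lemma load_update_of_not_mem (a : Fin n → Finset E) (i : Fin n) (s : Finset E) (e : E)
    (h1 : e ∉ a i) (h2 : e ∈ s) :
    CG.load (Function.update a i s) e = CG.load a e + 1 := by
  unfold CG.load
  have : (univ.filter fun i' => e ∈ Function.update a i s i')
      = insert i (univ.filter fun i' => e ∈ a i') := by
    ext i'
    rcases eq_or_ne i' i with rfl | hne
    · simp [h2]
    · simp [Function.update_of_ne hne, hne]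
  rw [this, Finset.card_insert_of_notMem (by simp [h1])]

lemma agentCost_update (b τs : Fin m → ℕ → ℝ) (γ γt : E → Fin m → ℝ)
    (a : Fin n → Finset E) (i : Fin n) (s : Finset E) :
    CG.agentCost b τs γ γt (Function.update a i s) i
      = ∑ e ∈ s, (if e ∈ a i then
          (CG.resCost b γ e (CG.load a e) + CG.resToll τs γt e (CG.load a e))
        else
          (CG.resCost b γ e (CG.load a e + 1) + CG.resToll τs γt e (CG.load a e + 1))) := by
  unfold CG.agentCost
  rw [Function.update_self]
  refine Finset.sum_congr rfl fun e he => ?_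
  by_cases h : e ∈ a i
  · rw [load_update_of_mem a i s e h he, if_pos h]
  · rw [load_update_of_not_mem a i s e h he, if_neg h]

lemma labelX_add_labelY (a w : Fin n → Finset E) (e : E) :
    CG.labelX a w e + CG.labelY a w e = CG.load a e := by
  unfold CG.labelX CG.labelY CG.load
  rw [← Finset.filter_filter (fun i => e ∈ a i) (fun i => e ∈ w i),
      ← Finset.filter_filter (fun i => e ∈ a i) (fun i => e ∉ w i)]
  exact Finset.card_filter_add_card_filter_not (fun i => e ∈ w i)

lemma labelX_add_labelZ (a w : Fin n → Finset E) (e : E) :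
    CG.labelX a w e + CG.labelZ a w e = CG.load w e := by
  unfold CG.labelX CG.labelZ CG.load
  rw [show (univ.filter fun i => e ∈ a i ∧ e ∈ w i)
      = (univ.filter fun i => e ∈ w i ∧ e ∈ a i) from
    Finset.filter_congr fun i _ => and_comm]
  rw [show (univ.filter fun i => e ∉ a i ∧ e ∈ w i)
      = (univ.filter fun i => e ∈ w i ∧ e ∉ a i) from
    Finset.filter_congr fun i _ => and_comm]
  rw [← Finset.filter_filter (fun i => e ∈ w i) (fun i => e ∈ a i),
      ← Finset.filter_filter (fun i => e ∈ w i) (fun i => e ∉ a i)]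
  exact Finset.card_filter_add_card_filter_not (fun i => e ∈ a i)

lemma labels_le (a w : Fin n → Finset E) (e : E) :
    CG.labelX a w e + CG.labelY a w e + CG.labelZ a w e ≤ n := by
  rw [labelX_add_labelY]
  unfold CG.load CG.labelZ
  calc (univ.filter fun i => e ∈ a i).card + (univ.filter fun i => e ∉ a i ∧ e ∈ w i).card
      ≤ (univ.filter fun i => e ∈ a i).card + (univ.filter fun i => ¬ (e ∈ a i)).card := by
        have h : (univ.filter fun i => e ∉ a i ∧ e ∈ w i).card
            ≤ (univ.filter fun i => ¬ (e ∈ a i)).card := by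
          refine Finset.card_le_card ?_
          intro i hi
          simp only [Finset.mem_filter] at *
          exact ⟨hi.1, hi.2.1⟩
        omega
    _ = (univ : Finset (Fin n)).card :=
        Finset.card_filter_add_card_filter_not (fun i => e ∈ a i)
    _ = n := by simp


lemma sumI_congr {f g : ℕ → ℕ → ℕ → Fin m → ℝ}
    (h : ∀ x y z : ℕ, ∀ j : Fin m, f x y z j = g x y z j) :
    CG.sumI n f = CG.sumI n g := by
  unfold CG.sumI
  refine Finset.sum_congr rfl fun x _ => Finset.sum_congr rfl fun y _ =>
    Finset.sum_congr rfl fun z _ => Finset.sum_congr rfl fun j _ => ?_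
  rw [h]

lemma sumI_add (f g : ℕ → ℕ → ℕ → Fin m → ℝ) :
    CG.sumI n (fun x y z j => f x y z j + g x y z j) = CG.sumI n f + CG.sumI n g := by
  unfold CG.sumI
  simp only [← Finset.sum_add_distrib]
  refine Finset.sum_congr rfl fun x _ => Finset.sum_congr rfl fun y _ =>
    Finset.sum_congr rfl fun z _ => Finset.sum_congr rfl fun j _ => ?_
  split <;> simp

lemma sumI_sub (f g : ℕ → ℕ → ℕ → Fin m → ℝ) :
    CG.sumI n (fun x y z j => f x y z j - g x y z j) = CG.sumI n f - CG.sumI n g := by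
  unfold CG.sumI
  simp only [← Finset.sum_sub_distrib]
  refine Finset.sum_congr rfl fun x _ => Finset.sum_congr rfl fun y _ =>
    Finset.sum_congr rfl fun z _ => Finset.sum_congr rfl fun j _ => ?_
  split <;> simp

lemma sumI_mul_left (c : ℝ) (f : ℕ → ℕ → ℕ → Fin m → ℝ) :
    CG.sumI n (fun x y z j => c * f x y z j) = c * CG.sumI n f := by
  unfold CG.sumI
  simp only [Finset.mul_sum]
  refine Finset.sum_congr rfl fun x _ => Finset.sum_congr rfl fun y _ =>
    Finset.sum_congr rfl fun z _ => Finset.sum_congr rfl fun j _ => ?_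
  split <;> simp

lemma sumI_nonneg {f : ℕ → ℕ → ℕ → Fin m → ℝ}
    (h : ∀ x y z : ℕ, ∀ j : Fin m, 0 ≤ f x y z j) : 0 ≤ CG.sumI n f := by
  unfold CG.sumI
  refine Finset.sum_nonneg fun x _ => Finset.sum_nonneg fun y _ =>
    Finset.sum_nonneg fun z _ => Finset.sum_nonneg fun j _ => ?_
  split
  · exact h x y z j
  · exact le_refl 0


lemma pull_sum {ι : Type} [Fintype ι] {κ : Type} [Fintype κ]
    (s1 s2 s3 : Finset ℕ) (F : ℕ → ℕ → ℕ → κ → ι → ℝ) :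
    (∑ x ∈ s1, ∑ y ∈ s2, ∑ z ∈ s3, ∑ j : κ, ∑ e : ι, F x y z j e)
      = ∑ e : ι, ∑ x ∈ s1, ∑ y ∈ s2, ∑ z ∈ s3, ∑ j : κ, F x y z j e := by
  trans (∑ x ∈ s1, ∑ y ∈ s2, ∑ z ∈ s3, ∑ e : ι, ∑ j : κ, F x y z j e)
  · exact Finset.sum_congr rfl fun x _ => Finset.sum_congr rfl fun y _ =>
      Finset.sum_congr rfl fun z _ => Finset.sum_comm
  trans (∑ x ∈ s1, ∑ y ∈ s2, ∑ e : ι, ∑ z ∈ s3, ∑ j : κ, F x y z j e)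
  · exact Finset.sum_congr rfl fun x _ => Finset.sum_congr rfl fun y _ =>
      Finset.sum_comm
  trans (∑ x ∈ s1, ∑ e : ι, ∑ y ∈ s2, ∑ z ∈ s3, ∑ j : κ, F x y z j e)
  · exact Finset.sum_congr rfl fun x _ => Finset.sum_comm
  exact Finset.sum_comm

lemma labels_sum (a w : Fin n → Finset E) (γ'' : E → Fin m → ℝ)
    (g : ℕ → ℕ → ℕ → Fin m → ℝ) (hg : ∀ j, g 0 0 0 j = 0) :
    CG.sumI n (fun x y z j => g x y z j * CG.labelSum γ'' a w x y z j)
      = ∑ e, ∑ j, γ'' e j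
          * g (CG.labelX a w e) (CG.labelY a w e) (CG.labelZ a w e) j := by
  have step1 : ∀ x y z : ℕ, ∀ j : Fin m,
      (if 1 ≤ x + y + z ∧ x + y + z ≤ n
        then g x y z j * CG.labelSum γ'' a w x y z j else 0)
      = ∑ e, (if CG.labelX a w e = x then if CG.labelY a w e = y then
          if CG.labelZ a w e = z then
            (if 1 ≤ x + y + z ∧ x + y + z ≤ n then g x y z j * γ'' e j else 0)
          else 0 else 0 else 0) := by
    intro x y z j
    by_cases hc : 1 ≤ x + y + z ∧ x + y + z ≤ n
    · rw [if_pos hc, CG.labelSum, Finset.sum_filter, Finset.mul_sum]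
      refine Finset.sum_congr rfl fun e _ => ?_
      by_cases h1 : CG.labelX a w e = x <;> by_cases h2 : CG.labelY a w e = y <;>
        by_cases h3 : CG.labelZ a w e = z <;> simp [h1, h2, h3, hc]
    · rw [if_neg hc]
      symm
      refine Finset.sum_eq_zero fun e _ => ?_
      simp [hc]
  rw [CG.sumI]
  simp only [step1]
  rw [pull_sum]
  refine Finset.sum_congr rfl fun e _ => ?_
  have hXle : CG.labelX a w e + CG.labelY a w e + CG.labelZ a w e ≤ n := labels_le a w e
  rw [Finset.sum_eq_single_of_mem (CG.labelX a w e)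
      (Finset.mem_range.mpr (by omega))
      (fun x _ hx => Finset.sum_eq_zero fun y _ => Finset.sum_eq_zero fun z _ =>
        Finset.sum_eq_zero fun j _ => by simp [Ne.symm hx])]
  simp only [eq_self_iff_true, if_true]
  rw [Finset.sum_eq_single_of_mem (CG.labelY a w e)
      (Finset.mem_range.mpr (by omega))
      (fun y _ hy => Finset.sum_eq_zero fun z _ =>
        Finset.sum_eq_zero fun j _ => by simp [Ne.symm hy])]
  simp only [eq_self_iff_true, if_true]
  rw [Finset.sum_eq_single_of_mem (CG.labelZ a w e)
      (Finset.mem_range.mpr (by omega))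
      (fun z _ hz => Finset.sum_eq_zero fun j _ => by simp [Ne.symm hz])]
  simp only [eq_self_iff_true, if_true]
  refine Finset.sum_congr rfl fun j _ => ?_
  by_cases h1 : 1 ≤ CG.labelX a w e + CG.labelY a w e + CG.labelZ a w e
  · rw [if_pos ⟨h1, hXle⟩, mul_comm]
  · have hx0 : CG.labelX a w e = 0 := by omega
    have hy0 : CG.labelY a w e = 0 := by omega
    have hz0 : CG.labelZ a w e = 0 := by omega
    rw [if_neg (by omega)]
    rw [hx0, hy0, hz0, hg j, mul_zero]


lemma sum_dev (b τs : Fin m → ℕ → ℝ) (γ γt : E → Fin m → ℝ)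
    (a w : Fin n → Finset E) :
    ∑ e, ((CG.labelY a w e : ℝ)
            * (CG.resCost b γ e (CG.load a e) + CG.resToll τs γt e (CG.load a e))
          - (CG.labelZ a w e : ℝ)
            * (CG.resCost b γ e (CG.load a e + 1) + CG.resToll τs γt e (CG.load a e + 1)))
      = (∑ i, CG.agentCost b τs γ γt a i)
        - ∑ i, CG.agentCost b τs γ γt (Function.update a i (w i)) i := by
  set F : E → ℕ → ℝ := fun e k => CG.resCost b γ e k + CG.resToll τs γt e k with hF
  have hA : (∑ i, CG.agentCost b τs γ γt a i)
      = ∑ e, ((CG.labelX a w e + CG.labelY a w e : ℕ) : ℝ) * F e (CG.load a e) := by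
    unfold CG.agentCost
    have : ∀ i : Fin n, (∑ e ∈ a i, F e (CG.load a e))
        = ∑ e : E, if e ∈ a i then F e (CG.load a e) else 0 := by
      intro i
      rw [Finset.sum_ite_mem, Finset.univ_inter]
    rw [Finset.sum_congr rfl fun i _ => this i]
    rw [Finset.sum_comm]
    refine Finset.sum_congr rfl fun e _ => ?_
    rw [sum_ite_count (fun i => e ∈ a i) (F e (CG.load a e)),
        labelX_add_labelY]
    rfl
  have hB : (∑ i, CG.agentCost b τs γ γt (Function.update a i (w i)) i)
      = ∑ e, ((CG.labelX a w e : ℝ) * F e (CG.load a e)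
              + (CG.labelZ a w e : ℝ) * F e (CG.load a e + 1)) := by
    have h1 : ∀ i : Fin n, CG.agentCost b τs γ γt (Function.update a i (w i)) i
        = ∑ e : E, ((if e ∈ a i ∧ e ∈ w i then F e (CG.load a e) else 0)
            + (if ¬ (e ∈ a i) ∧ e ∈ w i then F e (CG.load a e + 1) else 0)) := by
      intro i
      rw [agentCost_update]
      have : (∑ e ∈ w i, (if e ∈ a i then F e (CG.load a e) else F e (CG.load a e + 1)))
          = ∑ e : E, if e ∈ w i then
              (if e ∈ a i then F e (CG.load a e) else F e (CG.load a e + 1)) else 0 := by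
        rw [Finset.sum_ite_mem, Finset.univ_inter]
      rw [this]
      refine Finset.sum_congr rfl fun e _ => ?_
      by_cases h1 : e ∈ w i <;> by_cases h2 : e ∈ a i <;> simp [h1, h2]
    simp only [h1]
    rw [Finset.sum_comm]
    refine Finset.sum_congr rfl fun e _ => ?_
    rw [Finset.sum_add_distrib,
        sum_ite_count (fun i => e ∈ a i ∧ e ∈ w i) (F e (CG.load a e)),
        sum_ite_count (fun i => ¬ (e ∈ a i) ∧ e ∈ w i) (F e (CG.load a e + 1))]
    rfl
  rw [hA, hB, ← Finset.sum_sub_distrib]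
  refine Finset.sum_congr rfl fun e _ => ?_
  push_cast
  ring

lemma pstar_le (b τs : Fin m → ℕ → ℝ) (hb : ∀ j k, 0 ≤ b j k) (δ : ℝ)
    (θ θh : ℕ → ℕ → ℕ → Fin m → ℝ) (hf : CG.Feasible n b τs δ θ θh) :
    CG.pstar n m b τs δ
      ≤ CG.sumI n (fun x y z j => (x + z : ℝ) * b j (x + z) * θ x y z j) := by
  refine csInf_le ⟨0, ?_⟩ ⟨θ, θh, hf, rfl⟩
  rintro r ⟨θ', θh', hf', rfl⟩
  refine sumI_nonneg fun x y z j => ?_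
  have h1 : (0:ℝ) ≤ (x + z : ℝ) := by positivity
  exact mul_nonneg (mul_nonneg h1 (hb j _)) (hf'.1 x y z j)

lemma sound (b τs : Fin m → ℕ → ℝ) (hb : ∀ j k, 0 ≤ b j k) (δ : ℝ)
    (γ γt : E → Fin m → ℝ) (hγ : ∀ e j, 0 ≤ γ e j) (hγt : ∀ e j, 0 ≤ γt e j)
    (hband : ∀ e j, (1 - δ) * γ e j ≤ γt e j ∧ γt e j ≤ (1 + δ) * γ e j)
    (a w : Fin n → Finset E)
    (hN : ∀ i, CG.agentCost b τs γ γt a i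
        ≤ CG.agentCost b τs γ γt (Function.update a i (w i)) i)
    (hca : 0 < CG.sysCost b γ a) :
    CG.pstar n m b τs δ * CG.sysCost b γ a ≤ CG.sysCost b γ w := by
  set c := CG.sysCost b γ a with hc
  set X := CG.labelX a w
  set Y := CG.labelY a w
  set Z := CG.labelZ a w
  set θ' : ℕ → ℕ → ℕ → Fin m → ℝ :=
    fun x y z j => CG.labelSum γ a w x y z j / c with hθ'
  set θh' : ℕ → ℕ → ℕ → Fin m → ℝ :=
    fun x y z j => CG.labelSum γt a w x y z j / c with hθh'
  have hLnonneg : ∀ (γ'' : E → Fin m → ℝ), (∀ e j, 0 ≤ γ'' e j) →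
      ∀ x y z : ℕ, ∀ j : Fin m, 0 ≤ CG.labelSum γ'' a w x y z j := by
    intro γ'' h x y z j
    exact Finset.sum_nonneg fun e _ => h e j
  -- system cost identities
  have hsysA : ∑ e, ∑ j, γ e j * (((X e : ℝ) + (Y e : ℝ)) * b j (X e + Y e)) = c := by
    rw [hc]
    unfold CG.sysCost CG.resCost
    refine Finset.sum_congr rfl fun e _ => ?_
    rw [Finset.mul_sum]
    refine Finset.sum_congr rfl fun j _ => ?_
    have h1 : X e + Y e = CG.load a e := labelX_add_labelY a w e
    rw [← h1]
    push_cast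
    ring
  have hsysW : ∑ e, ∑ j, γ e j * (((X e : ℝ) + (Z e : ℝ)) * b j (X e + Z e))
      = CG.sysCost b γ w := by
    unfold CG.sysCost CG.resCost
    refine Finset.sum_congr rfl fun e _ => ?_
    rw [Finset.mul_sum]
    refine Finset.sum_congr rfl fun j _ => ?_
    have h1 : X e + Z e = CG.load w e := labelX_add_labelZ a w e
    rw [← h1]
    push_cast
    ring
  have hfeas : CG.Feasible n b τs δ θ' θh' := by
    refine ⟨?_, ?_, ?_, ?_, ?_⟩
    · intro x y z j
      exact div_nonneg (hLnonneg γ hγ x y z j) hca.le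
    · intro x y z j
      exact div_nonneg (hLnonneg γt hγt x y z j) hca.le
    · -- constraint (i)
      have e1 : CG.sumI n (fun x y z j => (x + y : ℝ) * b j (x + y) * θ' x y z j)
          = (1/c) * CG.sumI n (fun x y z j =>
              ((x + y : ℝ) * b j (x + y)) * CG.labelSum γ a w x y z j) := by
        rw [← sumI_mul_left]
        refine sumI_congr fun x y z j => ?_
        rw [hθ']
        field_simp
      rw [e1, labels_sum a w γ (fun x y z j => (x + y : ℝ) * b j (x + y))
            (fun j => by norm_num), hsysA]
      rw [one_div_mul_cancel hca.ne']
    · -- constraint (ii)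
      have e1 : CG.sumI n (fun x y z j =>
            ((y : ℝ) * b j (x + y) - (z : ℝ) * b j (x + y + 1)) * θ' x y z j
              + ((y : ℝ) * τs j (x + y) - (z : ℝ) * τs j (x + y + 1)) * θh' x y z j)
          = (1/c) * (CG.sumI n (fun x y z j =>
              ((y : ℝ) * b j (x + y) - (z : ℝ) * b j (x + y + 1))
                * CG.labelSum γ a w x y z j)
            + CG.sumI n (fun x y z j =>
              ((y : ℝ) * τs j (x + y) - (z : ℝ) * τs j (x + y + 1))
                * CG.labelSum γt a w x y z j)) := by
        rw [← sumI_add, ← sumI_mul_left]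
        refine sumI_congr fun x y z j => ?_
        rw [hθ', hθh']
        field_simp
        try ring
      rw [e1, labels_sum a w γ
            (fun x y z j => (y : ℝ) * b j (x + y) - (z : ℝ) * b j (x + y + 1))
            (fun j => by norm_num),
          labels_sum a w γt
            (fun x y z j => (y : ℝ) * τs j (x + y) - (z : ℝ) * τs j (x + y + 1))
            (fun j => by norm_num)]
      have key : (∑ e, ∑ j, γ e j * ((Y e : ℝ) * b j (X e + Y e)
              - (Z e : ℝ) * b j (X e + Y e + 1)))
            + (∑ e, ∑ j, γt e j * ((Y e : ℝ) * τs j (X e + Y e)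
              - (Z e : ℝ) * τs j (X e + Y e + 1)))
          = ∑ e, ((Y e : ℝ)
              * (CG.resCost b γ e (CG.load a e) + CG.resToll τs γt e (CG.load a e))
            - (Z e : ℝ)
              * (CG.resCost b γ e (CG.load a e + 1)
                 + CG.resToll τs γt e (CG.load a e + 1))) := by
        rw [← Finset.sum_add_distrib]
        refine Finset.sum_congr rfl fun e _ => ?_
        have h1 : X e + Y e = CG.load a e := labelX_add_labelY a w e
        unfold CG.resCost CG.resToll
        rw [← h1]
        simp only [mul_add, Finset.mul_sum, ← Finset.sum_add_distrib,
          ← Finset.sum_sub_distrib]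
        refine Finset.sum_congr rfl fun j _ => ?_
        ring
      rw [key, sum_dev b τs γ γt a w]
      have hsum : (∑ i, CG.agentCost b τs γ γt a i)
          - (∑ i, CG.agentCost b τs γ γt (Function.update a i (w i)) i) ≤ 0 := by
        rw [sub_nonpos]
        exact Finset.sum_le_sum fun i _ => hN i
      have h1c : 0 < 1/c := by positivity
      nlinarith
    · intro x y z j
      constructor
      · rw [hθ', hθh']
        simp only
        rw [← mul_div_assoc]
        refine div_le_div_of_nonneg_right ?_ hca.le
        unfold CG.labelSum
        rw [Finset.mul_sum]
        exact Finset.sum_le_sum fun e _ => (hband e j).1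
      · rw [hθ', hθh']
        simp only
        rw [← mul_div_assoc]
        refine div_le_div_of_nonneg_right ?_ hca.le
        unfold CG.labelSum
        rw [Finset.mul_sum]
        exact Finset.sum_le_sum fun e _ => (hband e j).2
  have hobj : CG.sumI n (fun x y z j => (x + z : ℝ) * b j (x + z) * θ' x y z j)
      = CG.sysCost b γ w / c := by
    have e1 : CG.sumI n (fun x y z j => (x + z : ℝ) * b j (x + z) * θ' x y z j)
        = (1/c) * CG.sumI n (fun x y z j =>
            ((x + z : ℝ) * b j (x + z)) * CG.labelSum γ a w x y z j) := by
      rw [← sumI_mul_left]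
      refine sumI_congr fun x y z j => ?_
      rw [hθ']
      field_simp
    rw [e1, labels_sum a w γ (fun x y z j => (x + z : ℝ) * b j (x + z))
          (fun j => by norm_num), hsysW]
    rw [one_div, inv_mul_eq_div]
  have := pstar_le b τs hb δ θ' θh' hfeas
  rw [hobj] at this
  calc CG.pstar n m b τs δ * c ≤ (CG.sysCost b γ w / c) * c := by
        exact mul_le_mul_of_nonneg_right this hca.le
    _ = CG.sysCost b γ w := by field_simp

end generic

section constr
variable (n' m : ℕ)

abbrev TT : Type := Fin (n'+1+1) × Fin (n'+1+1) × Fin (n'+1+1) × Fin m × Fin (n'+1)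

def xv (t : TT n' m) : ℕ := (t.1 : ℕ)
def yv (t : TT n' m) : ℕ := (t.2.1 : ℕ)
def zv (t : TT n' m) : ℕ := (t.2.2.1 : ℕ)
def jv (t : TT n' m) : Fin m := t.2.2.2.1
def rv (t : TT n' m) : Fin (n'+1) := t.2.2.2.2

def VA (t : TT n' m) (i : Fin (n'+1)) : Prop :=
  (1 ≤ xv n' m t + yv n' m t + zv n' m t ∧ xv n' m t + yv n' m t + zv n' m t ≤ n'+1)
    ∧ (rv n' m t + i).val < xv n' m t + yv n' m t

def VB (t : TT n' m) (i : Fin (n'+1)) : Prop :=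
  (1 ≤ xv n' m t + yv n' m t + zv n' m t ∧ xv n' m t + yv n' m t + zv n' m t ≤ n'+1)
    ∧ (yv n' m t ≤ (rv n' m t + i).val
        ∧ (rv n' m t + i).val < yv n' m t + (xv n' m t + zv n' m t))

instance (t : TT n' m) (i : Fin (n'+1)) : Decidable (VA n' m t i) := by
  unfold VA; infer_instance

instance (t : TT n' m) (i : Fin (n'+1)) : Decidable (VB n' m t i) := by
  unfold VB; infer_instance

def KK : ℕ := Fintype.card (TT n' m)

noncomputable def ee : TT n' m ≃ Fin (KK n' m) := Fintype.equivFin _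

noncomputable def aNE (i : Fin (n'+1)) : Finset (Fin (KK n' m)) :=
  univ.filter fun e => VA n' m ((ee n' m).symm e) i

noncomputable def aOP (i : Fin (n'+1)) : Finset (Fin (KK n' m)) :=
  univ.filter fun e => VB n' m ((ee n' m).symm e) i

noncomputable def Gam (θ : ℕ → ℕ → ℕ → Fin m → ℝ) (e : Fin (KK n' m)) (j' : Fin m) : ℝ :=
  if (1 ≤ xv n' m ((ee n' m).symm e) + yv n' m ((ee n' m).symm e) + zv n' m ((ee n' m).symm e)
      ∧ xv n' m ((ee n' m).symm e) + yv n' m ((ee n' m).symm e) + zv n' m ((ee n' m).symm e) ≤ n'+1)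
      ∧ j' = jv n' m ((ee n' m).symm e)
  then θ (xv n' m ((ee n' m).symm e)) (yv n' m ((ee n' m).symm e)) (zv n' m ((ee n' m).symm e)) j'
  else 0

noncomputable def Acts (i : Fin (n'+1)) : Finset (Finset (Fin (KK n' m))) :=
  {aNE n' m i, aOP n' m i}

-- counting lemmas
lemma count_shift (c : Fin (n'+1)) (Q : ℕ → Prop) [DecidablePred Q] :
    ((univ : Finset (Fin (n'+1))).filter fun v => Q ((v + c).val)).card
      = ((univ : Finset (Fin (n'+1))).filter fun v => Q v.val).card := by
  refine Finset.card_bij (fun v _ => v + c) ?_ ?_ ?_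
  · intro v hv
    simp only [Finset.mem_filter, Finset.mem_univ, true_and] at hv ⊢
    exact hv
  · intro v1 _ v2 _ hh
    exact add_right_cancel hh
  · intro d hd
    simp only [Finset.mem_filter, Finset.mem_univ, true_and] at hd ⊢
    refine ⟨d - c, ?_, by rw [sub_add_cancel]⟩
    rw [sub_add_cancel]
    exact hd

lemma card_window (N lo hi : ℕ) (h : hi ≤ N) :
    ((univ : Finset (Fin N)).filter fun v => lo ≤ v.val ∧ v.val < hi).card = hi - lo := by
  rw [← Nat.card_Ico]
  refine Finset.card_bij (fun v _ => (v : ℕ)) ?_ ?_ ?_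
  · intro v hv
    simp only [Finset.mem_filter] at hv
    exact Finset.mem_Ico.mpr hv.2
  · intro v1 _ v2 _ hh
    exact Fin.val_injective hh
  · intro d hd
    rw [Finset.mem_Ico] at hd
    exact ⟨⟨d, lt_of_lt_of_le hd.2 h⟩, by simp [hd.1, hd.2], rfl⟩

lemma sum_ite_shift (c : Fin (n'+1)) (lo hi : ℕ) (h : hi ≤ n'+1) (s : ℝ) :
    (∑ v : Fin (n'+1),
        if lo ≤ (v + c).val ∧ (v + c).val < hi then s else 0)
      = ((hi - lo : ℕ) : ℝ) * s := by
  rw [sum_ite_count (fun v : Fin (n'+1) =>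
        lo ≤ (v + c).val ∧ (v + c).val < hi) s,
      count_shift n' c (fun d => lo ≤ d ∧ d < hi), card_window (n'+1) lo hi h]

-- conversion of Fin-indexed class sums to sumI
lemma finsum_to_sumI (F : ℕ → ℕ → ℕ → Fin m → ℝ) :
    (∑ x : Fin (n'+1+1), ∑ y : Fin (n'+1+1), ∑ z : Fin (n'+1+1), ∑ j : Fin m,
      if 1 ≤ (x:ℕ) + (y:ℕ) + (z:ℕ) ∧ (x:ℕ) + (y:ℕ) + (z:ℕ) ≤ n'+1
      then F (x:ℕ) (y:ℕ) (z:ℕ) j else 0)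
    = CG.sumI (n'+1) F := by
  rw [CG.sumI]
  rw [← Fin.sum_univ_eq_sum_range (fun xn => ∑ yn ∈ Finset.range (n'+1+1),
      ∑ zn ∈ Finset.range (n'+1+1), ∑ j : Fin m,
      if 1 ≤ xn + yn + zn ∧ xn + yn + zn ≤ n'+1 then F xn yn zn j else 0) (n'+1+1)]
  refine Finset.sum_congr rfl fun x _ => ?_
  rw [← Fin.sum_univ_eq_sum_range (fun yn => ∑ zn ∈ Finset.range (n'+1+1),
      ∑ j : Fin m,
      if 1 ≤ (x:ℕ) + yn + zn ∧ (x:ℕ) + yn + zn ≤ n'+1 then F (x:ℕ) yn zn j else 0) (n'+1+1)]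
  refine Finset.sum_congr rfl fun y _ => ?_
  rw [← Fin.sum_univ_eq_sum_range (fun zn => ∑ j : Fin m,
      if 1 ≤ (x:ℕ) + (y:ℕ) + zn ∧ (x:ℕ) + (y:ℕ) + zn ≤ n'+1
      then F (x:ℕ) (y:ℕ) zn j else 0) (n'+1+1)]

lemma sum_T (G : TT n' m → ℝ) (F : ℕ → ℕ → ℕ → Fin m → ℝ)
    (h : ∀ (x y z : Fin (n'+1+1)) (j : Fin m),
      (∑ r : Fin (n'+1), G (x, y, z, j, r))
        = if 1 ≤ (x:ℕ) + (y:ℕ) + (z:ℕ) ∧ (x:ℕ) + (y:ℕ) + (z:ℕ) ≤ n'+1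
          then F (x:ℕ) (y:ℕ) (z:ℕ) j else 0) :
    (∑ e : Fin (KK n' m), G ((ee n' m).symm e)) = CG.sumI (n'+1) F := by
  rw [Equiv.sum_comp (ee n' m).symm G]
  rw [show (∑ t : TT n' m, G t)
      = ∑ x : Fin (n'+1+1), ∑ y : Fin (n'+1+1), ∑ z : Fin (n'+1+1), ∑ j : Fin m,
          ∑ r : Fin (n'+1), G (x, y, z, j, r) from by
    simp only [Fintype.sum_prod_type]]
  simp only [h]
  exact finsum_to_sumI n' m F


lemma count_shift' (c : Fin (n'+1)) (Q : ℕ → Prop) [DecidablePred Q] :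
    ((univ : Finset (Fin (n'+1))).filter fun v => Q ((c + v).val)).card
      = ((univ : Finset (Fin (n'+1))).filter fun v => Q v.val).card := by
  refine Finset.card_bij (fun v _ => c + v) ?_ ?_ ?_
  · intro v hv
    simp only [Finset.mem_filter, Finset.mem_univ, true_and] at hv ⊢
    exact hv
  · intro v1 _ v2 _ hh
    exact add_left_cancel hh
  · intro d hd
    simp only [Finset.mem_filter, Finset.mem_univ, true_and] at hd ⊢
    refine ⟨-c + d, ?_, by rw [add_neg_cancel_left]⟩
    rw [add_neg_cancel_left]
    exact hd

lemma card_window0 (N hi : ℕ) (h : hi ≤ N) :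
    ((univ : Finset (Fin N)).filter fun v => v.val < hi).card = hi := by
  rw [Finset.filter_congr (fun v (_ : v ∈ univ) =>
        (show v.val < hi ↔ 0 ≤ v.val ∧ v.val < hi by omega)),
      card_window N 0 hi h]
  omega

lemma sum_ite_shift0 (c : Fin (n'+1)) (hi : ℕ) (h : hi ≤ n'+1) (s : ℝ) :
    (∑ v : Fin (n'+1), if (v + c).val < hi then s else 0) = (hi : ℝ) * s := by
  rw [sum_ite_count (fun v : Fin (n'+1) => (v + c).val < hi) s,
      count_shift n' c (fun d => d < hi), card_window0 (n'+1) hi h]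

@[simp] lemma xv_mk (x y z : Fin (n'+1+1)) (j : Fin m) (r : Fin (n'+1)) :
    xv n' m (x, y, z, j, r) = (x : ℕ) := rfl
@[simp] lemma yv_mk (x y z : Fin (n'+1+1)) (j : Fin m) (r : Fin (n'+1)) :
    yv n' m (x, y, z, j, r) = (y : ℕ) := rfl
@[simp] lemma zv_mk (x y z : Fin (n'+1+1)) (j : Fin m) (r : Fin (n'+1)) :
    zv n' m (x, y, z, j, r) = (z : ℕ) := rfl
@[simp] lemma jv_mk (x y z : Fin (n'+1+1)) (j : Fin m) (r : Fin (n'+1)) :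
    jv n' m (x, y, z, j, r) = j := rfl
@[simp] lemma rv_mk (x y z : Fin (n'+1+1)) (j : Fin m) (r : Fin (n'+1)) :
    rv n' m (x, y, z, j, r) = r := rfl

lemma mem_aNE (e : Fin (KK n' m)) (i : Fin (n'+1)) :
    e ∈ aNE n' m i ↔ VA n' m ((ee n' m).symm e) i := by
  simp [aNE]

lemma mem_aOP (e : Fin (KK n' m)) (i : Fin (n'+1)) :
    e ∈ aOP n' m i ↔ VB n' m ((ee n' m).symm e) i := by
  simp [aOP]

lemma load_aNE (e : Fin (KK n' m)) :
    CG.load (aNE n' m) e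
      = if (1 ≤ xv n' m ((ee n' m).symm e) + yv n' m ((ee n' m).symm e)
              + zv n' m ((ee n' m).symm e)
          ∧ xv n' m ((ee n' m).symm e) + yv n' m ((ee n' m).symm e)
              + zv n' m ((ee n' m).symm e) ≤ n'+1)
        then xv n' m ((ee n' m).symm e) + yv n' m ((ee n' m).symm e) else 0 := by
  set t := (ee n' m).symm e with ht
  unfold CG.load
  by_cases hv : 1 ≤ xv n' m t + yv n' m t + zv n' m t
      ∧ xv n' m t + yv n' m t + zv n' m t ≤ n'+1
  · rw [if_pos hv]
    rw [show (univ.filter fun i => e ∈ aNE n' m i)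
        = univ.filter fun i => ((rv n' m t + i).val < xv n' m t + yv n' m t) from
      Finset.filter_congr fun i _ => by
        rw [mem_aNE, ← ht]
        unfold VA
        exact ⟨fun hh => hh.2, fun hh => ⟨hv, hh⟩⟩]
    rw [count_shift' n' (rv n' m t) (fun d => d < xv n' m t + yv n' m t),
        card_window0 (n'+1) _ (by omega)]
  · rw [if_neg hv]
    rw [show (univ.filter fun i => e ∈ aNE n' m i) = ∅ from
      Finset.filter_eq_empty_iff.mpr fun i _ => by
        rw [mem_aNE, ← ht]
        unfold VA
        exact fun hh => hv hh.1]
    rfl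

lemma load_aOP (e : Fin (KK n' m)) :
    CG.load (aOP n' m) e
      = if (1 ≤ xv n' m ((ee n' m).symm e) + yv n' m ((ee n' m).symm e)
              + zv n' m ((ee n' m).symm e)
          ∧ xv n' m ((ee n' m).symm e) + yv n' m ((ee n' m).symm e)
              + zv n' m ((ee n' m).symm e) ≤ n'+1)
        then xv n' m ((ee n' m).symm e) + zv n' m ((ee n' m).symm e) else 0 := by
  set t := (ee n' m).symm e with ht
  unfold CG.load
  by_cases hv : 1 ≤ xv n' m t + yv n' m t + zv n' m t
      ∧ xv n' m t + yv n' m t + zv n' m t ≤ n'+1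
  · rw [if_pos hv]
    rw [show (univ.filter fun i => e ∈ aOP n' m i)
        = univ.filter fun i => (yv n' m t ≤ (rv n' m t + i).val
            ∧ (rv n' m t + i).val < yv n' m t + (xv n' m t + zv n' m t)) from
      Finset.filter_congr fun i _ => by
        rw [mem_aOP, ← ht]
        unfold VB
        exact ⟨fun hh => hh.2, fun hh => ⟨hv, hh⟩⟩]
    rw [count_shift' n' (rv n' m t)
          (fun d => yv n' m t ≤ d ∧ d < yv n' m t + (xv n' m t + zv n' m t)),
        card_window (n'+1) _ _ (by omega)]
    omega
  · rw [if_neg hv]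
    rw [show (univ.filter fun i => e ∈ aOP n' m i) = ∅ from
      Finset.filter_eq_empty_iff.mpr fun i _ => by
        rw [mem_aOP, ← ht]
        unfold VB
        exact fun hh => hv hh.1]
    rfl

lemma resCost_Gam (θ : ℕ → ℕ → ℕ → Fin m → ℝ) (bb : Fin m → ℕ → ℝ)
    (e : Fin (KK n' m)) (k : ℕ) :
    CG.resCost bb (Gam n' m θ) e k
      = if (1 ≤ xv n' m ((ee n' m).symm e) + yv n' m ((ee n' m).symm e)
              + zv n' m ((ee n' m).symm e)
          ∧ xv n' m ((ee n' m).symm e) + yv n' m ((ee n' m).symm e)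
              + zv n' m ((ee n' m).symm e) ≤ n'+1)
        then θ (xv n' m ((ee n' m).symm e)) (yv n' m ((ee n' m).symm e))
              (zv n' m ((ee n' m).symm e)) (jv n' m ((ee n' m).symm e))
            * bb (jv n' m ((ee n' m).symm e)) k
        else 0 := by
  set t := (ee n' m).symm e with ht
  unfold CG.resCost Gam
  rw [← ht]
  by_cases hv : 1 ≤ xv n' m t + yv n' m t + zv n' m t
      ∧ xv n' m t + yv n' m t + zv n' m t ≤ n'+1
  · rw [if_pos hv]
    rw [show (∑ j', (if (1 ≤ xv n' m t + yv n' m t + zv n' m t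
            ∧ xv n' m t + yv n' m t + zv n' m t ≤ n'+1) ∧ j' = jv n' m t
          then θ (xv n' m t) (yv n' m t) (zv n' m t) j' else 0) * bb j' k)
        = ∑ j', if j' = jv n' m t
            then θ (xv n' m t) (yv n' m t) (zv n' m t) j' * bb j' k else 0 from
      Finset.sum_congr rfl fun j' _ => by
        by_cases h : j' = jv n' m t <;> simp [h, hv]]
    rw [Finset.sum_ite_eq' univ (jv n' m t)
        (fun j' => θ (xv n' m t) (yv n' m t) (zv n' m t) j' * bb j' k)]
    simp
  · rw [if_neg hv]
    refine Finset.sum_eq_zero fun j' _ => ?_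
    rw [if_neg (fun hh => hv hh.1), zero_mul]

lemma resToll_eq_resCost (τs : Fin m → ℕ → ℝ) {E : Type} [Fintype E] [DecidableEq E]
    (g : E → Fin m → ℝ) (e : E) (k : ℕ) :
    CG.resToll τs g e k = CG.resCost τs g e k := rfl


lemma JA (b τs : Fin m → ℕ → ℝ) (θs θhs : ℕ → ℕ → ℕ → Fin m → ℝ) (i : Fin (n'+1)) :
    CG.agentCost b τs (Gam n' m θs) (Gam n' m θhs) (aNE n' m) i
      = CG.sumI (n'+1) (fun x y z j =>
          ((x + y : ℕ) : ℝ)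
            * (θs x y z j * b j (x+y) + θhs x y z j * τs j (x+y))) := by
  set G : TT n' m → ℝ := fun t =>
    if VA n' m t i then
      θs (xv n' m t) (yv n' m t) (zv n' m t) (jv n' m t)
          * b (jv n' m t) (xv n' m t + yv n' m t)
        + θhs (xv n' m t) (yv n' m t) (zv n' m t) (jv n' m t)
          * τs (jv n' m t) (xv n' m t + yv n' m t)
    else 0 with hG
  have h1 : CG.agentCost b τs (Gam n' m θs) (Gam n' m θhs) (aNE n' m) i
      = ∑ e : Fin (KK n' m), G ((ee n' m).symm e) := by
    unfold CG.agentCost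
    rw [← Finset.univ_inter (aNE n' m i), ← Finset.sum_ite_mem]
    refine Finset.sum_congr rfl fun e _ => ?_
    simp only [hG]
    by_cases h : e ∈ aNE n' m i
    · have hVA : VA n' m ((ee n' m).symm e) i := (mem_aNE n' m e i).mp h
      rw [if_pos h, if_pos hVA, load_aNE, if_pos hVA.1,
          resCost_Gam, if_pos hVA.1, resToll_eq_resCost, resCost_Gam, if_pos hVA.1]
    · have hVA : ¬ VA n' m ((ee n' m).symm e) i :=
        fun hh => h ((mem_aNE n' m e i).mpr hh)
      rw [if_neg h, if_neg hVA]
  rw [h1]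
  refine sum_T n' m G _ ?_
  intro x y z j
  simp only [hG]
  by_cases hc : 1 ≤ (x:ℕ) + (y:ℕ) + (z:ℕ) ∧ (x:ℕ) + (y:ℕ) + (z:ℕ) ≤ n'+1
  · rw [if_pos hc]
    have hsum : ∀ r : Fin (n'+1),
        (if VA n' m (x,y,z,j,r) i then
          θs (xv n' m (x,y,z,j,r)) (yv n' m (x,y,z,j,r)) (zv n' m (x,y,z,j,r))
              (jv n' m (x,y,z,j,r))
            * b (jv n' m (x,y,z,j,r)) (xv n' m (x,y,z,j,r) + yv n' m (x,y,z,j,r))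
          + θhs (xv n' m (x,y,z,j,r)) (yv n' m (x,y,z,j,r)) (zv n' m (x,y,z,j,r))
              (jv n' m (x,y,z,j,r))
            * τs (jv n' m (x,y,z,j,r)) (xv n' m (x,y,z,j,r) + yv n' m (x,y,z,j,r))
        else 0)
        = (if (r + i).val < (x:ℕ) + (y:ℕ) then
            θs (x:ℕ) (y:ℕ) (z:ℕ) j * b j ((x:ℕ)+(y:ℕ))
              + θhs (x:ℕ) (y:ℕ) (z:ℕ) j * τs j ((x:ℕ)+(y:ℕ)) else 0) := by
      intro r
      simp only [xv_mk, yv_mk, zv_mk, jv_mk, rv_mk]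
      by_cases hA : (r + i).val < (x:ℕ) + (y:ℕ)
      · rw [if_pos (show VA n' m (x,y,z,j,r) i by unfold VA; exact ⟨hc, hA⟩), if_pos hA]
      · rw [if_neg (show ¬ VA n' m (x,y,z,j,r) i by unfold VA; exact fun hh => hA hh.2),
          if_neg hA]
    simp only [hsum]
    rw [sum_ite_shift0 n' i ((x:ℕ)+(y:ℕ)) (by omega)]
  · rw [if_neg hc]
    refine Finset.sum_eq_zero fun r _ => ?_
    have hna : ¬ VA n' m (x,y,z,j,r) i := by
      unfold VA
      simp only [xv_mk, yv_mk, zv_mk]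
      exact fun hh => hc hh.1
    rw [if_neg hna]

lemma JB (b τs : Fin m → ℕ → ℝ) (θs θhs : ℕ → ℕ → ℕ → Fin m → ℝ) (i : Fin (n'+1)) :
    CG.agentCost b τs (Gam n' m θs) (Gam n' m θhs)
        (Function.update (aNE n' m) i (aOP n' m i)) i
      = CG.sumI (n'+1) (fun x y z j =>
          ((x : ℕ) : ℝ) * (θs x y z j * b j (x+y) + θhs x y z j * τs j (x+y))
          + ((z : ℕ) : ℝ)
            * (θs x y z j * b j (x+y+1) + θhs x y z j * τs j (x+y+1))) := by
  set G : TT n' m → ℝ := fun t =>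
    if VB n' m t i then
      (if VA n' m t i then
        θs (xv n' m t) (yv n' m t) (zv n' m t) (jv n' m t)
            * b (jv n' m t) (xv n' m t + yv n' m t)
          + θhs (xv n' m t) (yv n' m t) (zv n' m t) (jv n' m t)
            * τs (jv n' m t) (xv n' m t + yv n' m t)
      else
        θs (xv n' m t) (yv n' m t) (zv n' m t) (jv n' m t)
            * b (jv n' m t) (xv n' m t + yv n' m t + 1)
          + θhs (xv n' m t) (yv n' m t) (zv n' m t) (jv n' m t)
            * τs (jv n' m t) (xv n' m t + yv n' m t + 1))
    else 0 with hG
  have h1 : CG.agentCost b τs (Gam n' m θs) (Gam n' m θhs)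
        (Function.update (aNE n' m) i (aOP n' m i)) i
      = ∑ e : Fin (KK n' m), G ((ee n' m).symm e) := by
    rw [agentCost_update]
    rw [← Finset.univ_inter (aOP n' m i), ← Finset.sum_ite_mem]
    refine Finset.sum_congr rfl fun e _ => ?_
    simp only [hG]
    by_cases h : e ∈ aOP n' m i
    · have hVB : VB n' m ((ee n' m).symm e) i := (mem_aOP n' m e i).mp h
      rw [if_pos h, if_pos hVB]
      by_cases h2 : e ∈ aNE n' m i
      · have hVA : VA n' m ((ee n' m).symm e) i := (mem_aNE n' m e i).mp h2
        rw [if_pos h2, if_pos hVA, load_aNE, if_pos hVB.1,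
            resCost_Gam, if_pos hVB.1, resToll_eq_resCost, resCost_Gam, if_pos hVB.1]
      · have hVA : ¬ VA n' m ((ee n' m).symm e) i :=
          fun hh => h2 ((mem_aNE n' m e i).mpr hh)
        rw [if_neg h2, if_neg hVA, load_aNE, if_pos hVB.1,
            resCost_Gam, if_pos hVB.1, resToll_eq_resCost, resCost_Gam, if_pos hVB.1]
    · have hVB : ¬ VB n' m ((ee n' m).symm e) i :=
        fun hh => h ((mem_aOP n' m e i).mpr hh)
      rw [if_neg h, if_neg hVB]
  rw [h1]
  refine sum_T n' m G _ ?_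
  intro x y z j
  simp only [hG]
  by_cases hc : 1 ≤ (x:ℕ) + (y:ℕ) + (z:ℕ) ∧ (x:ℕ) + (y:ℕ) + (z:ℕ) ≤ n'+1
  · rw [if_pos hc]
    have hsum : ∀ r : Fin (n'+1),
        (if VB n' m (x,y,z,j,r) i then
          (if VA n' m (x,y,z,j,r) i then
            θs (xv n' m (x,y,z,j,r)) (yv n' m (x,y,z,j,r)) (zv n' m (x,y,z,j,r))
                (jv n' m (x,y,z,j,r))
              * b (jv n' m (x,y,z,j,r)) (xv n' m (x,y,z,j,r) + yv n' m (x,y,z,j,r))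
            + θhs (xv n' m (x,y,z,j,r)) (yv n' m (x,y,z,j,r)) (zv n' m (x,y,z,j,r))
                (jv n' m (x,y,z,j,r))
              * τs (jv n' m (x,y,z,j,r)) (xv n' m (x,y,z,j,r) + yv n' m (x,y,z,j,r))
          else
            θs (xv n' m (x,y,z,j,r)) (yv n' m (x,y,z,j,r)) (zv n' m (x,y,z,j,r))
                (jv n' m (x,y,z,j,r))
              * b (jv n' m (x,y,z,j,r)) (xv n' m (x,y,z,j,r) + yv n' m (x,y,z,j,r) + 1)
            + θhs (xv n' m (x,y,z,j,r)) (yv n' m (x,y,z,j,r)) (zv n' m (x,y,z,j,r))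
                (jv n' m (x,y,z,j,r))
              * τs (jv n' m (x,y,z,j,r))
                  (xv n' m (x,y,z,j,r) + yv n' m (x,y,z,j,r) + 1))
        else 0)
        = ((if (y:ℕ) ≤ (r + i).val ∧ (r + i).val < (x:ℕ) + (y:ℕ) then
              θs (x:ℕ) (y:ℕ) (z:ℕ) j * b j ((x:ℕ)+(y:ℕ))
                + θhs (x:ℕ) (y:ℕ) (z:ℕ) j * τs j ((x:ℕ)+(y:ℕ)) else 0)
          + (if (x:ℕ) + (y:ℕ) ≤ (r + i).val
                ∧ (r + i).val < (y:ℕ) + ((x:ℕ) + (z:ℕ)) then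
              θs (x:ℕ) (y:ℕ) (z:ℕ) j * b j ((x:ℕ)+(y:ℕ)+1)
                + θhs (x:ℕ) (y:ℕ) (z:ℕ) j * τs j ((x:ℕ)+(y:ℕ)+1) else 0)) := by
      intro r
      simp only [xv_mk, yv_mk, zv_mk, jv_mk, rv_mk]
      by_cases hB : (y:ℕ) ≤ (r + i).val ∧ (r + i).val < (y:ℕ) + ((x:ℕ) + (z:ℕ))
      · rw [if_pos (show VB n' m (x,y,z,j,r) i by unfold VB; exact ⟨hc, hB⟩)]
        by_cases hA : (r + i).val < (x:ℕ) + (y:ℕ)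
        · rw [if_pos (show VA n' m (x,y,z,j,r) i by unfold VA; exact ⟨hc, hA⟩),
              if_pos (⟨hB.1, hA⟩ : _ ∧ _),
              if_neg (show ¬ ((x:ℕ) + (y:ℕ) ≤ (r + i).val
                ∧ (r + i).val < (y:ℕ) + ((x:ℕ) + (z:ℕ))) by omega), add_zero]
        · rw [if_neg (show ¬ VA n' m (x,y,z,j,r) i by unfold VA; exact fun hh => hA hh.2),
              if_neg (show ¬ ((y:ℕ) ≤ (r + i).val ∧ (r + i).val < (x:ℕ) + (y:ℕ)) by
                omega),
              if_pos (show (x:ℕ) + (y:ℕ) ≤ (r + i).val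
                ∧ (r + i).val < (y:ℕ) + ((x:ℕ) + (z:ℕ)) by omega), zero_add]
      · rw [if_neg (show ¬ VB n' m (x,y,z,j,r) i by unfold VB; exact fun hh => hB hh.2),
            if_neg (show ¬ ((y:ℕ) ≤ (r + i).val ∧ (r + i).val < (x:ℕ) + (y:ℕ)) by
              omega),
            if_neg (show ¬ ((x:ℕ) + (y:ℕ) ≤ (r + i).val
              ∧ (r + i).val < (y:ℕ) + ((x:ℕ) + (z:ℕ))) by omega), add_zero]
    simp only [hsum]
    rw [Finset.sum_add_distrib,
        sum_ite_shift n' i (y:ℕ) ((x:ℕ)+(y:ℕ)) (by omega),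
        sum_ite_shift n' i ((x:ℕ)+(y:ℕ)) ((y:ℕ)+((x:ℕ)+(z:ℕ))) (by omega),
        show ((x:ℕ)+(y:ℕ)) - (y:ℕ) = (x:ℕ) by omega,
        show ((y:ℕ)+((x:ℕ)+(z:ℕ))) - ((x:ℕ)+(y:ℕ)) = (z:ℕ) by omega]
  · rw [if_neg hc]
    refine Finset.sum_eq_zero fun r _ => ?_
    have hnb : ¬ VB n' m (x,y,z,j,r) i := by
      unfold VB
      simp only [xv_mk, yv_mk, zv_mk]
      exact fun hh => hc hh.1
    rw [if_neg hnb]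


lemma sysA (b : Fin m → ℕ → ℝ) (θs : ℕ → ℕ → ℕ → Fin m → ℝ) :
    CG.sysCost b (Gam n' m θs) (aNE n' m)
      = ((n'+1 : ℕ) : ℝ)
        * CG.sumI (n'+1) (fun x y z j => (x + y : ℝ) * b j (x+y) * θs x y z j) := by
  set G : TT n' m → ℝ := fun t =>
    if (1 ≤ xv n' m t + yv n' m t + zv n' m t
        ∧ xv n' m t + yv n' m t + zv n' m t ≤ n'+1) then
      ((xv n' m t + yv n' m t : ℕ) : ℝ)
        * (θs (xv n' m t) (yv n' m t) (zv n' m t) (jv n' m t)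
            * b (jv n' m t) (xv n' m t + yv n' m t))
    else 0 with hG
  have h1 : CG.sysCost b (Gam n' m θs) (aNE n' m)
      = ∑ e : Fin (KK n' m), G ((ee n' m).symm e) := by
    unfold CG.sysCost
    refine Finset.sum_congr rfl fun e _ => ?_
    simp only [hG]
    rw [load_aNE, resCost_Gam]
    by_cases hv : 1 ≤ xv n' m ((ee n' m).symm e) + yv n' m ((ee n' m).symm e)
        + zv n' m ((ee n' m).symm e)
      ∧ xv n' m ((ee n' m).symm e) + yv n' m ((ee n' m).symm e)
        + zv n' m ((ee n' m).symm e) ≤ n'+1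
    · rw [if_pos hv, if_pos hv, if_pos hv]
      try ring
    · rw [if_neg hv, if_neg hv, if_neg hv]
      try simp
  rw [h1, sum_T n' m G (fun x y z j =>
      ((n'+1 : ℕ) : ℝ) * (((x + y : ℕ) : ℝ) * (θs x y z j * b j (x+y)))) ?_]
  · rw [sumI_mul_left]
    congr 1
    refine sumI_congr fun x y z j => ?_
    push_cast
    ring
  · intro x y z j
    simp only [hG, xv_mk, yv_mk, zv_mk, jv_mk]
    by_cases hc : 1 ≤ (x:ℕ) + (y:ℕ) + (z:ℕ) ∧ (x:ℕ) + (y:ℕ) + (z:ℕ) ≤ n'+1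
    · simp only [hc, and_self, ↓reduceIte, Finset.sum_const, Finset.card_univ,
          Fintype.card_fin, nsmul_eq_mul]
      try push_cast
      try ring
    · simp only [hc, ↓reduceIte, Finset.sum_const_zero]
      try simp

lemma sysB (b : Fin m → ℕ → ℝ) (θs : ℕ → ℕ → ℕ → Fin m → ℝ) :
    CG.sysCost b (Gam n' m θs) (aOP n' m)
      = ((n'+1 : ℕ) : ℝ)
        * CG.sumI (n'+1) (fun x y z j => (x + z : ℝ) * b j (x+z) * θs x y z j) := by
  set G : TT n' m → ℝ := fun t =>
    if (1 ≤ xv n' m t + yv n' m t + zv n' m t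
        ∧ xv n' m t + yv n' m t + zv n' m t ≤ n'+1) then
      ((xv n' m t + zv n' m t : ℕ) : ℝ)
        * (θs (xv n' m t) (yv n' m t) (zv n' m t) (jv n' m t)
            * b (jv n' m t) (xv n' m t + zv n' m t))
    else 0 with hG
  have h1 : CG.sysCost b (Gam n' m θs) (aOP n' m)
      = ∑ e : Fin (KK n' m), G ((ee n' m).symm e) := by
    unfold CG.sysCost
    refine Finset.sum_congr rfl fun e _ => ?_
    simp only [hG]
    rw [load_aOP, resCost_Gam]
    by_cases hv : 1 ≤ xv n' m ((ee n' m).symm e) + yv n' m ((ee n' m).symm e)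
        + zv n' m ((ee n' m).symm e)
      ∧ xv n' m ((ee n' m).symm e) + yv n' m ((ee n' m).symm e)
        + zv n' m ((ee n' m).symm e) ≤ n'+1
    · rw [if_pos hv, if_pos hv, if_pos hv]
      try ring
    · rw [if_neg hv, if_neg hv, if_neg hv]
      try simp
  rw [h1, sum_T n' m G (fun x y z j =>
      ((n'+1 : ℕ) : ℝ) * (((x + z : ℕ) : ℝ) * (θs x y z j * b j (x+z)))) ?_]
  · rw [sumI_mul_left]
    congr 1
    refine sumI_congr fun x y z j => ?_
    push_cast
    ring
  · intro x y z j
    simp only [hG, xv_mk, yv_mk, zv_mk, jv_mk]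
    by_cases hc : 1 ≤ (x:ℕ) + (y:ℕ) + (z:ℕ) ∧ (x:ℕ) + (y:ℕ) + (z:ℕ) ≤ n'+1
    · simp only [hc, and_self, ↓reduceIte, Finset.sum_const, Finset.card_univ,
          Fintype.card_fin, nsmul_eq_mul]
      try push_cast
      try ring
    · simp only [hc, ↓reduceIte, Finset.sum_const_zero]
      try simp

lemma nash (b τs : Fin m → ℕ → ℝ) (θs θhs : ℕ → ℕ → ℕ → Fin m → ℝ)
    (hcon2 : CG.sumI (n'+1) (fun x y z j =>
      ((y : ℝ) * b j (x + y) - (z : ℝ) * b j (x + y + 1)) * θs x y z j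
        + ((y : ℝ) * τs j (x + y) - (z : ℝ) * τs j (x + y + 1)) * θhs x y z j) ≤ 0) :
    CG.IsNash (Acts n' m) b τs (Gam n' m θs) (Gam n' m θhs) (aNE n' m) := by
  constructor
  · intro i
    exact Finset.mem_insert_self _ _
  · intro i ai' hmem
    rcases Finset.mem_insert.mp hmem with rfl | h
    · rw [Function.update_eq_self]
    · rw [Finset.mem_singleton.mp h]
      rw [JA, JB, ← sub_nonpos]
      have heq : CG.sumI (n'+1) (fun x y z j =>
            ((x + y : ℕ) : ℝ) * (θs x y z j * b j (x+y) + θhs x y z j * τs j (x+y)))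
          - CG.sumI (n'+1) (fun x y z j =>
            ((x : ℕ) : ℝ) * (θs x y z j * b j (x+y) + θhs x y z j * τs j (x+y))
            + ((z : ℕ) : ℝ)
              * (θs x y z j * b j (x+y+1) + θhs x y z j * τs j (x+y+1)))
          = CG.sumI (n'+1) (fun x y z j =>
            ((y : ℝ) * b j (x + y) - (z : ℝ) * b j (x + y + 1)) * θs x y z j
              + ((y : ℝ) * τs j (x + y) - (z : ℝ) * τs j (x + y + 1)) * θhs x y z j) := by
        rw [← sumI_sub]
        refine sumI_congr fun x y z j => ?_
        push_cast
        ring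
      rw [heq]
      exact hcon2

end constr

end RPT

/-- tightness direction of Proposition 2: if the robust-PoA linear
program attains its value `p⋆(δ) > 0` at some feasible pair `(θ⋆, θ̂⋆)`, then there
is an atomic congestion game (a finite resource set `Fin K`, action sets `A`, cost
parameters `γ`), misspecified parameters `γ̃` with relative error at most `δ`, a pure
Nash equilibrium `a` of `(G(γ), T(γ̃))` and an allocation `a'` with
`L(a'; γ) = p⋆(δ)·L(a; γ)` and `L(a; γ) > 0`; consequently
`PoA(G(γ), T(γ̃)) ≥ 1/p⋆(δ)`. -/
theorem robust_poa_tightness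
    {m : ℕ} (n : ℕ) (b τs : Fin m → ℕ → ℝ)
    (hb_nonneg : ∀ j k, 0 ≤ b j k) (hb_mono : ∀ j, Monotone (b j))
    (hb0 : ∀ j, b j 0 = 0) (hτ0 : ∀ j, τs j 0 = 0)
    (δ : ℝ) (hδ : 0 ≤ δ)
    (θs θhs : ℕ → ℕ → ℕ → Fin m → ℝ)
    (hfeas : CG.Feasible n b τs δ θs θhs)
    (hopt : CG.sumI n (fun x y z j => (x + z : ℝ) * b j (x + z) * θs x y z j)
      = CG.pstar n m b τs δ)
    (hpos : 0 < CG.pstar n m b τs δ) :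
    ∃ (K : ℕ) (A : Fin n → Finset (Finset (Fin K)))
      (γ γt : Fin K → Fin m → ℝ) (a a' : Fin n → Finset (Fin K)),
      (∀ i, (A i).Nonempty) ∧
      (∀ e j, 0 ≤ γ e j) ∧ (∀ e j, 0 ≤ γt e j) ∧
      (∀ e j, |γt e j - γ e j| ≤ δ * γ e j) ∧
      CG.IsNash A b τs γ γt a ∧
      (∀ i, a' i ∈ A i) ∧
      CG.sysCost b γ a' = CG.pstar n m b τs δ * CG.sysCost b γ a ∧
      0 < CG.sysCost b γ a ∧
      1 / CG.pstar n m b τs δ ≤ CG.PoA A b τs γ γt := by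
  obtain ⟨hθ0, hθh0, hcon1, hcon2, hband⟩ := hfeas
  have hn0 : n ≠ 0 := by
    rintro rfl
    rw [show CG.sumI 0 (fun x y z j => (x + y : ℝ) * b j (x + y) * θs x y z j) = 0 from by
      simp [CG.sumI]] at hcon1
    exact one_ne_zero hcon1.symm
  obtain ⟨n', rfl⟩ : ∃ n', n = n' + 1 := ⟨n - 1, by omega⟩
  -- abbreviations
  have hγ : ∀ (e : Fin (RPT.KK n' m)) (j : Fin m), 0 ≤ RPT.Gam n' m θs e j := by
    intro e j
    unfold RPT.Gam
    split
    · exact hθ0 _ _ _ _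
    · exact le_refl 0
  have hγt : ∀ (e : Fin (RPT.KK n' m)) (j : Fin m), 0 ≤ RPT.Gam n' m θhs e j := by
    intro e j
    unfold RPT.Gam
    split
    · exact hθh0 _ _ _ _
    · exact le_refl 0
  have hbandG : ∀ (e : Fin (RPT.KK n' m)) (j : Fin m),
      (1 - δ) * RPT.Gam n' m θs e j ≤ RPT.Gam n' m θhs e j
        ∧ RPT.Gam n' m θhs e j ≤ (1 + δ) * RPT.Gam n' m θs e j := by
    intro e j
    unfold RPT.Gam
    split
    · exact hband _ _ _ _
    · simp
  have hNash : CG.IsNash (RPT.Acts n' m) b τs (RPT.Gam n' m θs) (RPT.Gam n' m θhs)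
      (RPT.aNE n' m) := RPT.nash n' m b τs θs θhs hcon2
  have hA : CG.sysCost b (RPT.Gam n' m θs) (RPT.aNE n' m) = ((n' + 1 : ℕ) : ℝ) := by
    rw [RPT.sysA n' m b θs, hcon1, mul_one]
  have hB : CG.sysCost b (RPT.Gam n' m θs) (RPT.aOP n' m)
      = ((n' + 1 : ℕ) : ℝ) * CG.pstar (n' + 1) m b τs δ := by
    rw [RPT.sysB n' m b θs, hopt]
  have hNpos : (0 : ℝ) < ((n' + 1 : ℕ) : ℝ) := by positivity
  have hOPmem : ∀ i, RPT.aOP n' m i ∈ RPT.Acts n' m i := by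
    intro i
    exact Finset.mem_insert.mpr (Or.inr (Finset.mem_singleton_self _))
  have hcpos : 0 < CG.sysCost b (RPT.Gam n' m θs) (RPT.aNE n' m) := by
    rw [hA]; exact hNpos
  refine ⟨RPT.KK n' m, RPT.Acts n' m, RPT.Gam n' m θs, RPT.Gam n' m θhs,
    RPT.aNE n' m, RPT.aOP n' m, ?_, hγ, hγt, ?_, hNash, hOPmem, ?_, hcpos, ?_⟩
  · intro i
    exact ⟨_, Finset.mem_insert_self _ _⟩
  · -- band in abs form
    intro e j
    have h := hbandG e j
    have h0 := hγ e j
    rw [abs_le]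
    constructor <;> nlinarith [h.1, h.2]
  · -- system cost identity
    rw [hB, hA]
    ring
  · -- PoA bound
    unfold CG.PoA
    have hfin1 : (CG.sysCost b (RPT.Gam n' m θs) ''
        {a | CG.IsNash (RPT.Acts n' m) b τs (RPT.Gam n' m θs) (RPT.Gam n' m θhs) a}).Finite :=
      (Set.toFinite _).image _
    have hfin2 : (CG.sysCost b (RPT.Gam n' m θs) ''
        {a : Fin (n' + 1) → Finset (Fin (RPT.KK n' m)) |
          ∀ i, a i ∈ RPT.Acts n' m i}).Finite :=
      (Set.toFinite _).image _
    have hsup : ((n' + 1 : ℕ) : ℝ)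
        ≤ sSup (CG.sysCost b (RPT.Gam n' m θs) ''
            {a | CG.IsNash (RPT.Acts n' m) b τs (RPT.Gam n' m θs) (RPT.Gam n' m θhs) a}) :=
      le_csSup hfin1.bddAbove ⟨RPT.aNE n' m, hNash, hA⟩
    have hinfle : sInf (CG.sysCost b (RPT.Gam n' m θs) ''
          {a : Fin (n' + 1) → Finset (Fin (RPT.KK n' m)) | ∀ i, a i ∈ RPT.Acts n' m i})
        ≤ ((n' + 1 : ℕ) : ℝ) * CG.pstar (n' + 1) m b τs δ :=
      csInf_le hfin2.bddBelow ⟨RPT.aOP n' m, hOPmem, hB⟩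
    have hinfge : ((n' + 1 : ℕ) : ℝ) * CG.pstar (n' + 1) m b τs δ
        ≤ sInf (CG.sysCost b (RPT.Gam n' m θs) ''
          {a : Fin (n' + 1) → Finset (Fin (RPT.KK n' m)) | ∀ i, a i ∈ RPT.Acts n' m i}) := by
      refine le_csInf ⟨_, ⟨RPT.aOP n' m, hOPmem, rfl⟩⟩ ?_
      rintro r ⟨w, hw, rfl⟩
      have hsound := RPT.sound b τs hb_nonneg δ (RPT.Gam n' m θs) (RPT.Gam n' m θhs)
        hγ hγt hbandG (RPT.aNE n' m) w
        (fun i => hNash.2 i (w i) (hw i)) hcpos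
      rw [hA] at hsound
      linarith [hsound]
    have hinf : sInf (CG.sysCost b (RPT.Gam n' m θs) ''
          {a : Fin (n' + 1) → Finset (Fin (RPT.KK n' m)) | ∀ i, a i ∈ RPT.Acts n' m i})
        = ((n' + 1 : ℕ) : ℝ) * CG.pstar (n' + 1) m b τs δ :=
      le_antisymm hinfle hinfge
    rw [hinf]
    have hppos := hpos
    have heq : 1 / CG.pstar (n' + 1) m b τs δ
        = ((n' + 1 : ℕ) : ℝ) / (((n' + 1 : ℕ) : ℝ) * CG.pstar (n' + 1) m b τs δ) := by
      rw [eq_div_iff (by positivity)]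
      field_simp
    rw [heq]
    gcongr
end
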